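/- arXiv:1005.3336 — 6 statements merged into one kernel-verified Lean document; each statement's English description precedes it below -/
import Mathlib

section
/- Let α ∈ (0, π] and let λ be a nonzero real number. Then the Dirichlet integral ∫_{G \ B(0,1)} |∇v_λ(x)|² dx over the part of the sector outside the unit disc is finite if and only if λ < 0, in which case it equals −αλ/2. -/
open MeasureTheory

/-- The open plane sector `G = {(r cos θ, r sin θ) : r > 0, 0 < θ < α}` of opening
angle `α`. -/
def sector (α : ℝ) : Set (ℝ × ℝ) :=
  {p | ∃ r θ : ℝ, 0 < r ∧ 0 < θ ∧ θ < α ∧ p = (r * Real.cos θ, r * Real.sin θ)}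

/-- The open unit disc `B(0,1)` in the plane. -/
def unitDisc : Set (ℝ × ℝ) := {p | p.1 ^ 2 + p.2 ^ 2 < 1}

/-- The separated solution `v_λ(x₁, x₂) = Im((x₁ + i x₂)^λ)`, where the complex power
uses the principal branch of the logarithm. -/
noncomputable def vpow (l : ℝ) (p : ℝ × ℝ) : ℝ :=
  (((p.1 : ℂ) + Complex.I * (p.2 : ℂ)) ^ (l : ℂ)).im

/-- The squared Euclidean norm of the gradient of `v_λ`. -/
noncomputable def gradSqVpow (l : ℝ) (p : ℝ × ℝ) : ℝ :=
  fderiv ℝ (vpow l) p (1, 0) ^ 2 + fderiv ℝ (vpow l) p (0, 1) ^ 2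

/-- The `ℝ`-linear map `(x, y) ↦ x + y i`. -/
noncomputable def auxE : (ℝ × ℝ) →L[ℝ] ℂ :=
  (ContinuousLinearMap.fst ℝ ℝ ℝ).smulRight 1 +
    (ContinuousLinearMap.snd ℝ ℝ ℝ).smulRight Complex.I

lemma auxE_apply (q : ℝ × ℝ) : auxE q = (q.1 : ℂ) + Complex.I * q.2 := by
  simp [auxE, Complex.real_smul]
  ring

/-- Explicit formula for the squared gradient of `vpow` on the upper half plane. -/
lemma gradSqVpow_eq {l : ℝ} {p : ℝ × ℝ} (hp : 0 < p.2) :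
    gradSqVpow l p = l ^ 2 * (p.1 ^ 2 + p.2 ^ 2) ^ (l - 1) := by
  set z : ℂ := (p.1 : ℂ) + Complex.I * p.2 with hz
  have hzim : z.im = p.2 := by simp [hz]
  have hzslit : z ∈ Complex.slitPlane := by
    rw [Complex.mem_slitPlane_iff, hzim]
    exact Or.inr hp.ne'
  set d : ℂ := (l : ℂ) * z ^ ((l : ℂ) - 1) with hd
  -- derivative of the complex power
  have hcd : HasDerivAt (fun w : ℂ => w ^ (l : ℂ)) d z :=
    (Complex.hasStrictDerivAt_cpow_const hzslit).hasDerivAt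
  have hE : HasFDerivAt (fun q : ℝ × ℝ => (q.1 : ℂ) + Complex.I * q.2) auxE p := by
    have := auxE.hasFDerivAt (x := p)
    exact this.congr_of_eventuallyEq (Filter.Eventually.of_forall fun q => (auxE_apply q).symm)
  have hcomp : HasFDerivAt (fun q : ℝ × ℝ => ((q.1 : ℂ) + Complex.I * q.2) ^ (l : ℂ))
      (((ContinuousLinearMap.smulRight (1 : ℂ →L[ℂ] ℂ) d).restrictScalars ℝ).comp auxE) p := by
    have h1 : HasFDerivAt (fun w : ℂ => w ^ (l : ℂ))
        ((ContinuousLinearMap.smulRight (1 : ℂ →L[ℂ] ℂ) d).restrictScalars ℝ) z :=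
      hcd.hasFDerivAt.restrictScalars ℝ
    exact h1.comp p hE
  have hv : HasFDerivAt (vpow l)
      (Complex.imCLM.comp (((ContinuousLinearMap.smulRight (1 : ℂ →L[ℂ] ℂ) d).restrictScalars ℝ).comp auxE)) p :=
    (Complex.imCLM.hasFDerivAt).comp p hcomp
  have hfd := hv.fderiv
  have h10 : fderiv ℝ (vpow l) p (1, 0) = d.im := by
    rw [hfd]
    simp [auxE_apply]
  have h01 : fderiv ℝ (vpow l) p (0, 1) = d.re := by
    rw [hfd]
    simp [auxE_apply]
  have habs : ‖d‖ = |l| * ‖z‖ ^ (l - 1) := by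
    rw [hd, norm_mul, Complex.norm_real, Real.norm_eq_abs]
    congr 1
    have : ((l : ℂ) - 1) = ((l - 1 : ℝ) : ℂ) := by push_cast; ring
    rw [this, Complex.norm_cpow_real]
  have hzabs : p.1 ^ 2 + p.2 ^ 2 = ‖z‖ ^ (2 : ℕ) := by
    rw [Complex.sq_norm, Complex.normSq_apply]
    simp [hz]
    ring
  have hzne : z ≠ 0 := by
    intro h0
    rw [h0] at hzim
    simp at hzim
    exact hp.ne' hzim.symm
  have hzpos : 0 < ‖z‖ := norm_pos_iff.mpr hzne
  have hnorm : d.im ^ 2 + d.re ^ 2 = ‖d‖ ^ 2 := by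
    rw [Complex.sq_norm, Complex.normSq_apply]
    ring
  rw [gradSqVpow, h10, h01, hnorm, habs, hzabs, mul_pow, ← Real.rpow_natCast (‖z‖) 2,
    ← Real.rpow_natCast (‖z‖ ^ (l - 1)) 2, ← Real.rpow_mul hzpos.le,
    ← Real.rpow_mul hzpos.le, sq_abs]
  norm_num
  exact Or.inl (by rw [mul_comm])

/-- The region of integration in polar coordinates. -/
lemma sector_diff_eq {α : ℝ} (hα₀ : 0 < α) (hα₁ : α ≤ Real.pi) :
    sector α \ unitDisc = polarCoord.symm '' (Set.Ici 1 ×ˢ Set.Ioo 0 α) := by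
  ext p
  simp only [Set.mem_diff, sector, unitDisc, Set.mem_setOf_eq, Set.mem_image, Set.mem_prod,
    Set.mem_Ici, Set.mem_Ioo, polarCoord_symm_apply, Prod.exists]
  constructor
  · rintro ⟨⟨r, θ, hr, hθ1, hθ2, rfl⟩, hd⟩
    refine ⟨r, θ, ⟨?_, hθ1, hθ2⟩, rfl⟩
    by_contra h
    push_neg at h
    apply hd
    have h2 := Real.sin_sq_add_cos_sq θ
    have hsq : (r * Real.cos θ) ^ 2 + (r * Real.sin θ) ^ 2 = r ^ 2 := by
      linear_combination r ^ 2 * h2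
    show (r * Real.cos θ) ^ 2 + (r * Real.sin θ) ^ 2 < 1
    rw [hsq]
    nlinarith
  · rintro ⟨r, θ, ⟨hr, hθ1, hθ2⟩, rfl⟩
    refine ⟨⟨r, θ, by linarith, hθ1, hθ2, rfl⟩, ?_⟩
    have h2 := Real.sin_sq_add_cos_sq θ
    have hsq : (r * Real.cos θ) ^ 2 + (r * Real.sin θ) ^ 2 = r ^ 2 := by
      linear_combination r ^ 2 * h2
    show ¬ (r * Real.cos θ) ^ 2 + (r * Real.sin θ) ^ 2 < 1
    rw [hsq, not_lt]
    nlinarith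

set_option maxHeartbeats 1000000 in
/-- For `α ∈ (0, π]` and `λ ≠ 0`, the Dirichlet integral
`∫_{G \ B(0,1)} |∇v_λ|²` over the part of the sector outside the unit disc is finite
iff `λ < 0`, in which case it equals `−αλ/2`. -/
theorem stmt_8 (α l : ℝ) (hα₀ : 0 < α) (hα₁ : α ≤ Real.pi) (hl : l ≠ 0) :
    (IntegrableOn (gradSqVpow l) (sector α \ unitDisc) volume ↔ l < 0) ∧
    (l < 0 → ∫ x in sector α \ unitDisc, gradSqVpow l x = -(α * l) / 2) := by
  classical
  set A : Set (ℝ × ℝ) := Set.Ici 1 ×ˢ Set.Ioo 0 α with hA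
  have hAm : MeasurableSet A := measurableSet_Ici.prod measurableSet_Ioo
  have hsub : A ⊆ polarCoord.target := by
    rintro ⟨r, θ⟩ ⟨hr, hθ⟩
    simp only [Set.mem_Ici] at hr
    simp only [Set.mem_Ioo] at hθ
    simp only [polarCoord_target, Set.mem_prod, Set.mem_Ioi, Set.mem_Ioo]
    exact ⟨lt_of_lt_of_le one_pos hr,
      by linarith [Real.pi_pos, hθ.1], lt_of_lt_of_le hθ.2 hα₁⟩
  have hinj : Set.InjOn polarCoord.symm A := polarCoord.symm.injOn.mono hsub
  -- the derivative of the polar-coordinates map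
  set B : ℝ × ℝ → (ℝ × ℝ) →L[ℝ] ℝ × ℝ := fun p =>
    LinearMap.toContinuousLinearMap (Matrix.toLin (Module.Basis.finTwoProd ℝ) (Module.Basis.finTwoProd ℝ)
      !![Real.cos p.2, -p.1 * Real.sin p.2; Real.sin p.2, p.1 * Real.cos p.2]) with hB
  have hf' : ∀ x ∈ A, HasFDerivWithinAt polarCoord.symm (B x) A x := fun x _ =>
    (hasFDerivAt_polarCoord_symm x).hasFDerivWithinAt
  have hBdet : ∀ p, (B p).det = p.1 := by
    intro p
    conv_rhs => rw [← one_mul p.1, ← Real.cos_sq_add_sin_sq p.2]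
    simp only [hB, neg_mul, LinearMap.det_toContinuousLinearMap, LinearMap.det_toLin,
      Matrix.det_fin_two_of, sub_neg_eq_add]
    ring
  -- identify the transformed integrand on `A`
  set h : ℝ × ℝ → ℝ := fun x => l ^ 2 * x.1 ^ (2 * l - 1) with hh
  have hEq : Set.EqOn (fun x => |(B x).det| • gradSqVpow l (polarCoord.symm x)) h A := by
    rintro ⟨r, θ⟩ ⟨hr, hθ⟩
    simp only [Set.mem_Ici] at hr
    simp only [Set.mem_Ioo] at hθ
    have hrpos : (0:ℝ) < r := lt_of_lt_of_le one_pos hr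
    have hsin : 0 < Real.sin θ :=
      Real.sin_pos_of_pos_of_lt_pi hθ.1 (lt_of_lt_of_le hθ.2 hα₁)
    have hy : 0 < (polarCoord.symm (r, θ)).2 := by
      simp only [polarCoord_symm_apply]
      exact mul_pos hrpos hsin
    have hg := gradSqVpow_eq (l := l) hy
    simp only [hBdet, polarCoord_symm_apply] at hg ⊢
    rw [hg, abs_of_pos hrpos, smul_eq_mul]
    have hsq : (r * Real.cos θ) ^ 2 + (r * Real.sin θ) ^ 2 = r ^ 2 := by
      have h2 := Real.sin_sq_add_cos_sq θ
      nlinarith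
    rw [hsq, hh]
    simp only
    rw [← Real.rpow_natCast r 2, ← Real.rpow_mul hrpos.le]
    rw [show ((2:ℕ):ℝ) * (l - 1) = 2 * l - 2 by push_cast; ring]
    rw [show (2 * l - 1 : ℝ) = 1 + (2 * l - 2) by ring, Real.rpow_add hrpos, Real.rpow_one]
    ring
  -- change of variables
  have hSeq := sector_diff_eq hα₀ hα₁
  have hIntIff : IntegrableOn (gradSqVpow l) (sector α \ unitDisc) volume ↔
      IntegrableOn h A volume := by
    rw [hSeq, integrableOn_image_iff_integrableOn_abs_det_fderiv_smul volume hAm hf' hinj]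
    exact integrableOn_congr_fun hEq hAm
  have hIntEq : ∫ x in sector α \ unitDisc, gradSqVpow l x =
      ∫ x in A, h x := by
    rw [hSeq, integral_image_eq_integral_abs_det_fderiv_smul volume hAm hf' hinj]
    exact setIntegral_congr_fun hAm hEq
  -- product structure
  have hprodfun : h = fun z : ℝ × ℝ => (l ^ 2 * z.1 ^ (2 * l - 1)) * (fun _ : ℝ => (1:ℝ)) z.2 := by
    funext z; simp [hh]
  have hIoo_fin : volume (Set.Ioo (0:ℝ) α) < ⊤ := by
    rw [Real.volume_Ioo]; exact ENNReal.ofReal_lt_top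
  have hIci_ae : (volume : Measure ℝ).restrict (Set.Ici (1:ℝ)) =
      (volume : Measure ℝ).restrict (Set.Ioi (1:ℝ)) :=
    (Measure.restrict_congr_set Ioi_ae_eq_Ici).symm
  have hIffA : IntegrableOn h A volume ↔ l < 0 := by
    constructor
    · intro hint
      rw [IntegrableOn, hA, Measure.volume_eq_prod, ← Measure.prod_restrict] at hint
      have hsl := hint.prod_left_ae
      haveI hne : (ae (volume.restrict (Set.Ioo (0:ℝ) α))).NeBot := by
        rw [ae_neBot, Ne, Measure.restrict_eq_zero, Real.volume_Ioo]
        simp [ENNReal.ofReal_eq_zero, not_le, hα₀]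
      obtain ⟨θ, hθ⟩ := Filter.Eventually.exists hsl
      have h1 : IntegrableOn (fun r => l ^ 2 * r ^ (2 * l - 1)) (Set.Ici 1) volume := hθ
      have h2 : IntegrableOn (fun r => r ^ (2 * l - 1)) (Set.Ioi (1:ℝ)) volume := by
        have h3 : IntegrableOn (fun r => l ^ 2 * r ^ (2 * l - 1)) (Set.Ioi 1) volume :=
          h1.mono_set Set.Ioi_subset_Ici_self
        have h4 := h3.const_mul ((l ^ 2)⁻¹)
        refine IntegrableOn.congr_fun h4 (fun x _ => ?_) measurableSet_Ioi
        field_simp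
      rw [integrableOn_Ioi_rpow_iff zero_lt_one] at h2
      linarith
    · intro hlneg
      have h1 : IntegrableOn (fun r : ℝ => l ^ 2 * r ^ (2 * l - 1)) (Set.Ici 1) volume := by
        rw [IntegrableOn, hIci_ae]
        exact (integrableOn_Ioi_rpow_of_lt (by linarith) zero_lt_one).const_mul _
      have h2 : IntegrableOn (fun _ : ℝ => (1:ℝ)) (Set.Ioo 0 α) volume :=
        integrableOn_const hIoo_fin.ne
      have := h1.mul_prod h2
      rw [Measure.prod_restrict, ← Measure.volume_eq_prod] at this
      rw [hprodfun]
      exact this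
  refine ⟨hIntIff.trans hIffA, fun hlneg => ?_⟩
  have hint1 : ∫ x in Set.Ici (1:ℝ), l ^ 2 * x ^ (2 * l - 1) = l ^ 2 * (-1 / (2 * l)) := by
    rw [show ((volume : Measure ℝ).restrict (Set.Ici 1)) = volume.restrict (Set.Ioi 1) from
      hIci_ae]
    rw [MeasureTheory.integral_const_mul, integral_Ioi_rpow_of_lt (by linarith) zero_lt_one]
    rw [show (2 * l - 1 + 1 : ℝ) = 2 * l by ring, Real.one_rpow]
  have hint2 : ∫ _ in Set.Ioo (0:ℝ) α, (1:ℝ) = α := by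
    simp [Real.volume_Ioo, ENNReal.toReal_ofReal hα₀.le, hα₀.le]
  have hval := setIntegral_prod_mul (μ := (volume : Measure ℝ)) (ν := (volume : Measure ℝ))
    (fun r : ℝ => l ^ 2 * r ^ (2 * l - 1)) (fun _ : ℝ => (1:ℝ)) (Set.Ici 1) (Set.Ioo 0 α)
  rw [hint1, hint2] at hval
  rw [hIntEq, hA, Measure.volume_eq_prod,
    show h = (fun z : ℝ × ℝ => (fun r : ℝ => l ^ 2 * r ^ (2 * l - 1)) z.1 *
      (fun _ : ℝ => (1:ℝ)) z.2) from by funext z; simp [hh], hval]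
  field_simp
end

section
/- Let α ∈ (0, π] and let G, Γ₁, Γ₂ be as in the context. Let u, v : ℝ² → ℝ be continuously differentiable on an open set containing cl(G) \ {0}, harmonic on G, and satisfy the Neumann condition −sin α · ∂u/∂x₁ + cos α · ∂u/∂x₂ = 0 and −sin α · ∂v/∂x₁ + cos α · ∂v/∂x₂ = 0 at every point of Γ₂. Assume there exist constants C > 0 and δ > 0 such that for all x ∈ cl(G) \ {0}: |u(x)|·|∇v(x)| + |v(x)|·|∇u(x)| ≤ C|x|^{δ−1} whenever 0 < |x| ≤ 1, and ≤ C|x|^{−δ−1} whenever |x| ≥ 1. Assume moreover that x ↦ ∇u(x)·∇v(x) is integrable on G and that x₁ ↦ v(x₁, 0)·∂u/∂x₂(x₁, 0) and x₁ ↦ u(x₁, 0)·∂v/∂x₂(x₁, 0) are integrable on (0, ∞). Then ∫_G ∇u(x)·∇v(x) dx = −∫_0^∞ v(x₁, 0)·∂u/∂x₂(x₁, 0) dx₁ = −∫_0^∞ u(x₁, 0)·∂v/∂x₂(x₁, 0) dx₁. -/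
open MeasureTheory

/-- First partial derivative `∂u/∂x₁`. -/
noncomputable def pd1 (u : ℝ × ℝ → ℝ) (x : ℝ × ℝ) : ℝ := fderiv ℝ u x (1, 0)

/-- Second partial derivative `∂u/∂x₂`. -/
noncomputable def pd2 (u : ℝ × ℝ → ℝ) (x : ℝ × ℝ) : ℝ := fderiv ℝ u x (0, 1)

/-- Euclidean norm `|∇u(x)|` of the gradient. -/
noncomputable def gradNorm (u : ℝ × ℝ → ℝ) (x : ℝ × ℝ) : ℝ :=
  Real.sqrt (pd1 u x ^ 2 + pd2 u x ^ 2)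

/-- The scalar product `∇u(x)·∇v(x)` of the gradients. -/
noncomputable def gradDot (u v : ℝ × ℝ → ℝ) (x : ℝ × ℝ) : ℝ :=
  pd1 u x * pd1 v x + pd2 u x * pd2 v x

/-- `u` is harmonic on `G`: at every point of `G` it is twice differentiable and
`∂²u/∂x₁² + ∂²u/∂x₂² = 0`. -/
def HarmonicOnSector (α : ℝ) (u : ℝ × ℝ → ℝ) : Prop :=
  ∀ x ∈ sector α, DifferentiableAt ℝ u x ∧ DifferentiableAt ℝ (fderiv ℝ u) x ∧
    fderiv ℝ (fderiv ℝ u) x (1, 0) (1, 0) + fderiv ℝ (fderiv ℝ u) x (0, 1) (0, 1) = 0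

/-- Zero Neumann data on `Γ₂ = {(r cos α, r sin α) : r > 0}`:
`−sin α · ∂u/∂x₁ + cos α · ∂u/∂x₂ = 0` there. -/
def NeumannOnGamma2 (α : ℝ) (u : ℝ × ℝ → ℝ) : Prop :=
  ∀ r : ℝ, 0 < r →
    -Real.sin α * pd1 u (r * Real.cos α, r * Real.sin α)
      + Real.cos α * pd2 u (r * Real.cos α, r * Real.sin α) = 0


open Set Real Filter

noncomputable def Phi (p : ℝ × ℝ) : ℝ × ℝ := (p.1 * Real.cos p.2, p.1 * Real.sin p.2)

lemma Phi_eq_symm (p : ℝ × ℝ) : Phi p = polarCoord.symm p := rfl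

lemma norm_Phi (r θ : ℝ) (hr : 0 ≤ r) :
    Real.sqrt ((Phi (r, θ)).1 ^ 2 + (Phi (r, θ)).2 ^ 2) = r := by
  have h := Real.sin_sq_add_cos_sq θ
  have : (Phi (r, θ)).1 ^ 2 + (Phi (r, θ)).2 ^ 2 = r ^ 2 := by simp only [Phi]; nlinarith
  rw [this, Real.sqrt_sq hr]

lemma Phi_ne_zero {r θ : ℝ} (hr : 0 < r) : Phi (r, θ) ≠ 0 := by
  intro h
  have h1 : r * Real.cos θ = 0 := congrArg Prod.fst h
  have h2 : r * Real.sin θ = 0 := congrArg Prod.snd h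
  have h := Real.sin_sq_add_cos_sq θ
  nlinarith [sq_nonneg (r * Real.cos θ), sq_nonneg (r * Real.sin θ), mul_pos hr hr, h1, h2]


/-- truncated sector -/
def sectorAnn (α ε R : ℝ) : Set (ℝ × ℝ) :=
  {p | ∃ r θ : ℝ, ε < r ∧ r < R ∧ 0 < θ ∧ θ < α ∧ p = Phi (r, θ)}

lemma mem_target_of (hα : α ≤ Real.pi) {r θ : ℝ} (hr : 0 < r) (hθ0 : 0 < θ) (hθα : θ < α) :
    (r, θ) ∈ polarCoord.target := by
  rw [polarCoord_target]
  exact ⟨hr, by constructor <;> [linarith [Real.pi_pos]; linarith]⟩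

lemma sectorAnn_eq {α ε R : ℝ} (hα : α ≤ Real.pi) (hε : 0 ≤ ε) :
    sectorAnn α ε R = polarCoord.source ∩ polarCoord ⁻¹' (Set.Ioo ε R ×ˢ Set.Ioo 0 α) := by
  ext p
  constructor
  · rintro ⟨r, θ, h1, h2, h3, h4, rfl⟩
    have ht : (r, θ) ∈ polarCoord.target := mem_target_of hα (lt_of_le_of_lt hε h1) h3 h4
    rw [Phi_eq_symm]
    refine ⟨polarCoord.map_target ht, ?_⟩
    simp only [Set.mem_preimage, polarCoord.right_inv ht]
    exact ⟨⟨h1, h2⟩, h3, h4⟩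
  · rintro ⟨hs, hp⟩
    simp only [Set.mem_preimage, Set.mem_prod, Set.mem_Ioo] at hp
    exact ⟨(polarCoord p).1, (polarCoord p).2, hp.1.1, hp.1.2, hp.2.1, hp.2.2,
      by rw [Phi_eq_symm]; exact (polarCoord.left_inv hs).symm⟩

lemma sector_eq {α : ℝ} (hα : α ≤ Real.pi) :
    sector α = polarCoord.source ∩ polarCoord ⁻¹' (Set.Ioi 0 ×ˢ Set.Ioo 0 α) := by
  ext p
  constructor
  · rintro ⟨r, θ, h1, h3, h4, rfl⟩
    have ht : (r, θ) ∈ polarCoord.target := mem_target_of hα h1 h3 h4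
    have : (r * Real.cos θ, r * Real.sin θ) = polarCoord.symm (r, θ) := rfl
    rw [this]
    refine ⟨polarCoord.map_target ht, ?_⟩
    simp only [Set.mem_preimage, polarCoord.right_inv ht]
    exact ⟨h1, h3, h4⟩
  · rintro ⟨hs, hp⟩
    simp only [Set.mem_preimage, Set.mem_prod, Set.mem_Ioo, Set.mem_Ioi] at hp
    exact ⟨(polarCoord p).1, (polarCoord p).2, hp.1, hp.2.1, hp.2.2,
      by exact (polarCoord.left_inv hs).symm⟩

lemma isOpen_sector {α : ℝ} (hα : α ≤ Real.pi) : IsOpen (sector α) := by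
  rw [sector_eq hα]
  exact polarCoord.isOpen_inter_preimage (isOpen_Ioi.prod isOpen_Ioo)

lemma isOpen_sectorAnn {α ε R : ℝ} (hα : α ≤ Real.pi) (hε : 0 ≤ ε) : IsOpen (sectorAnn α ε R) := by
  rw [sectorAnn_eq hα hε]
  exact polarCoord.isOpen_inter_preimage (isOpen_Ioo.prod isOpen_Ioo)

lemma Phi_mem_sectorAnn_iff {α ε R : ℝ} (hα : α ≤ Real.pi) (hε : 0 ≤ ε) {p : ℝ × ℝ}
    (hp : p ∈ polarCoord.target) :
    Phi p ∈ sectorAnn α ε R ↔ p ∈ Set.Ioo ε R ×ˢ Set.Ioo 0 α := by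
  rw [sectorAnn_eq hα hε, Phi_eq_symm]
  constructor
  · rintro ⟨-, h⟩
    rwa [Set.mem_preimage, polarCoord.right_inv hp] at h
  · intro h
    exact ⟨polarCoord.map_target hp, by rwa [Set.mem_preimage, polarCoord.right_inv hp]⟩

lemma Phi_mem_sector {α r θ : ℝ} (hr : 0 < r) (h0 : 0 < θ) (hθ : θ < α) :
    Phi (r, θ) ∈ sector α := ⟨r, θ, hr, h0, hθ, rfl⟩

lemma Phi_mem_closure {α r θ : ℝ} (hα : 0 < α) (hr : 0 < r) (hθ : θ ∈ Set.Icc 0 α) :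
    Phi (r, θ) ∈ closure (sector α) := by
  have hcont : Continuous (fun t : ℝ => Phi (r, (1 - t) * θ + t * (α / 2))) := by
    unfold Phi; fun_prop
  have htend : Tendsto (fun t : ℝ => Phi (r, (1 - t) * θ + t * (α / 2))) (nhdsWithin 0 (Set.Ioi 0))
      (nhds (Phi (r, θ))) := by
    have h2 := (hcont.tendsto 0).mono_left (nhdsWithin_le_nhds (s := Set.Ioi (0:ℝ)))
    simpa using h2
  refine mem_closure_of_tendsto htend ?_
  filter_upwards [Ioo_mem_nhdsGT_of_mem (Set.mem_Ico.2 ⟨le_refl 0, one_pos⟩)] with t ht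
  refine Phi_mem_sector hr ?_ ?_
  · nlinarith [hθ.1, ht.1, ht.2]
  · nlinarith [hθ.2, ht.1, ht.2]

lemma Phi_mem_closure_diff {α r θ : ℝ} (hα : 0 < α) (hr : 0 < r) (hθ : θ ∈ Set.Icc 0 α) :
    Phi (r, θ) ∈ closure (sector α) \ {(0 : ℝ × ℝ)} :=
  ⟨Phi_mem_closure hα hr hθ, by simpa using Phi_ne_zero hr⟩

lemma sectorAnn_mono {α : ℝ} : Monotone (fun n : ℕ => sectorAnn α ((n + 1 : ℝ))⁻¹ (n + 1)) := by
  intro m n hmn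
  rintro p ⟨r, θ, h1, h2, h3, h4, rfl⟩
  have hm : (m : ℝ) + 1 ≤ n + 1 := by exact_mod_cast by omega
  refine ⟨r, θ, lt_of_le_of_lt ?_ h1, lt_of_lt_of_le h2 hm, h3, h4, rfl⟩
  exact inv_anti₀ (by positivity) hm

lemma iUnion_sectorAnn {α : ℝ} : (⋃ n : ℕ, sectorAnn α ((n + 1 : ℝ))⁻¹ (n + 1)) = sector α := by
  ext p
  simp only [Set.mem_iUnion]
  constructor
  · rintro ⟨n, r, θ, h1, h2, h3, h4, rfl⟩
    exact ⟨r, θ, lt_of_le_of_lt (by positivity) h1, h3, h4, rfl⟩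
  · rintro ⟨r, θ, h1, h3, h4, rfl⟩
    obtain ⟨n, hn⟩ := exists_nat_gt (max r r⁻¹)
    refine ⟨n, r, θ, ?_, ?_, h3, h4, rfl⟩
    · rw [inv_lt_comm₀ (by positivity) h1]
      calc r⁻¹ ≤ max r r⁻¹ := le_max_right _ _
        _ < n := hn
        _ ≤ n + 1 := by linarith
    · calc r ≤ max r r⁻¹ := le_max_left _ _
        _ < n := hn
        _ < n + 1 := by linarith


/-- the radial boundary-term function `A(r,θ) = v(x) ⟨x, ∇u(x)⟩`, `x = Φ(r,θ)` -/
noncomputable def Afun (u v : ℝ × ℝ → ℝ) (p : ℝ × ℝ) : ℝ :=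
  v (Phi p) * ((Phi p).1 * pd1 u (Phi p) + (Phi p).2 * pd2 u (Phi p))

/-- the angular boundary-term function `B(r,θ) = v(x)(−sin θ ∂₁u + cos θ ∂₂u)(x)` -/
noncomputable def Bfun (u v : ℝ × ℝ → ℝ) (p : ℝ × ℝ) : ℝ :=
  v (Phi p) * (-Real.sin p.2 * pd1 u (Phi p) + Real.cos p.2 * pd2 u (Phi p))

lemma two_dim_cauchy_schwarz (a b p q : ℝ) :
    |a * p + b * q| ≤ Real.sqrt (a ^ 2 + b ^ 2) * Real.sqrt (p ^ 2 + q ^ 2) := by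
  rw [← Real.sqrt_sq_eq_abs, ← Real.sqrt_mul (by positivity)]
  apply Real.sqrt_le_sqrt
  nlinarith [sq_nonneg (a * q - b * p)]

lemma Afun_bound (u v : ℝ × ℝ → ℝ) (r θ : ℝ) (hr : 0 ≤ r) :
    |Afun u v (r, θ)| ≤ r * (|u (Phi (r, θ))| * gradNorm v (Phi (r, θ))
      + |v (Phi (r, θ))| * gradNorm u (Phi (r, θ))) := by
  set x := Phi (r, θ)
  have h1 : |Afun u v (r, θ)| = |v x| * |x.1 * pd1 u x + x.2 * pd2 u x| := by
    rw [Afun, abs_mul]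
  rw [h1]
  have h2 : |x.1 * pd1 u x + x.2 * pd2 u x| ≤ r * gradNorm u x := by
    have := two_dim_cauchy_schwarz x.1 x.2 (pd1 u x) (pd2 u x)
    rwa [show Real.sqrt (x.1 ^ 2 + x.2 ^ 2) = r from norm_Phi r θ hr] at this
  calc |v x| * |x.1 * pd1 u x + x.2 * pd2 u x| ≤ |v x| * (r * gradNorm u x) := by
        exact mul_le_mul_of_nonneg_left h2 (abs_nonneg _)
    _ = r * (|v x| * gradNorm u x) := by ring
    _ ≤ r * (|u x| * gradNorm v x + |v x| * gradNorm u x) := by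
        apply mul_le_mul_of_nonneg_left _ hr
        nlinarith [abs_nonneg (u x), Real.sqrt_nonneg (pd1 v x ^ 2 + pd2 v x ^ 2),
          show gradNorm v x = Real.sqrt (pd1 v x ^ 2 + pd2 v x ^ 2) from rfl]

lemma clm_apply_pair {F : Type*} [NormedAddCommGroup F] [NormedSpace ℝ F]
    (L : ℝ × ℝ →L[ℝ] F) (a b : ℝ) : L (a, b) = a • L (1, 0) + b • L (0, 1) := by
  have h : (a, b) = a • ((1 : ℝ), (0 : ℝ)) + b • ((0 : ℝ), (1 : ℝ)) := by
    simp [Prod.ext_iff]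
  rw [h, map_add, _root_.map_smul, _root_.map_smul]

lemma div_step (u v : ℝ × ℝ → ℝ) (p : ℝ × ℝ)
    (hu1 : DifferentiableAt ℝ u (Phi p)) (hu2 : DifferentiableAt ℝ (fderiv ℝ u) (Phi p))
    (hv1 : DifferentiableAt ℝ v (Phi p))
    (hharm : fderiv ℝ (fderiv ℝ u) (Phi p) (1, 0) (1, 0)
      + fderiv ℝ (fderiv ℝ u) (Phi p) (0, 1) (0, 1) = 0) :
    ∃ LA LB : ℝ × ℝ →L[ℝ] ℝ, HasFDerivAt (Afun u v) LA p ∧ HasFDerivAt (Bfun u v) LB p ∧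
      LA (1, 0) + LB (0, 1) = p.1 * gradDot u v (Phi p) := by
  have hc : HasFDerivAt (fun q : ℝ × ℝ => Real.cos q.2)
      ((-Real.sin p.2) • ContinuousLinearMap.snd ℝ ℝ ℝ) p :=
    (Real.hasDerivAt_cos p.2).comp_hasFDerivAt p hasFDerivAt_snd
  have hs : HasFDerivAt (fun q : ℝ × ℝ => Real.sin q.2)
      ((Real.cos p.2) • ContinuousLinearMap.snd ℝ ℝ ℝ) p :=
    (Real.hasDerivAt_sin p.2).comp_hasFDerivAt p hasFDerivAt_snd
  have hPhi : HasFDerivAt Phi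
      ((p.1 • ((-Real.sin p.2) • ContinuousLinearMap.snd ℝ ℝ ℝ)
          + Real.cos p.2 • ContinuousLinearMap.fst ℝ ℝ ℝ).prod
        (p.1 • ((Real.cos p.2) • ContinuousLinearMap.snd ℝ ℝ ℝ)
          + Real.sin p.2 • ContinuousLinearMap.fst ℝ ℝ ℝ)) p :=
    (hasFDerivAt_fst.mul hc).prodMk (hasFDerivAt_fst.mul hs)
  set DP := (p.1 • ((-Real.sin p.2) • ContinuousLinearMap.snd ℝ ℝ ℝ)
          + Real.cos p.2 • ContinuousLinearMap.fst ℝ ℝ ℝ).prod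
        (p.1 • ((Real.cos p.2) • ContinuousLinearMap.snd ℝ ℝ ℝ)
          + Real.sin p.2 • ContinuousLinearMap.fst ℝ ℝ ℝ) with hDP
  have hvP : HasFDerivAt (fun q => v (Phi q)) ((fderiv ℝ v (Phi p)).comp DP) p :=
    hv1.hasFDerivAt.comp p hPhi
  have hp1 : HasFDerivAt (pd1 u)
      ((ContinuousLinearMap.apply ℝ ℝ ((1 : ℝ), (0 : ℝ))).comp
        (fderiv ℝ (fderiv ℝ u) (Phi p))) (Phi p) :=
    (ContinuousLinearMap.apply ℝ ℝ ((1 : ℝ), (0 : ℝ))).hasFDerivAt.comp (Phi p)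
      hu2.hasFDerivAt
  have hp2 : HasFDerivAt (pd2 u)
      ((ContinuousLinearMap.apply ℝ ℝ ((0 : ℝ), (1 : ℝ))).comp
        (fderiv ℝ (fderiv ℝ u) (Phi p))) (Phi p) :=
    (ContinuousLinearMap.apply ℝ ℝ ((0 : ℝ), (1 : ℝ))).hasFDerivAt.comp (Phi p)
      hu2.hasFDerivAt
  have hp1P : HasFDerivAt (fun q => pd1 u (Phi q))
      (((ContinuousLinearMap.apply ℝ ℝ ((1 : ℝ), (0 : ℝ))).comp
        (fderiv ℝ (fderiv ℝ u) (Phi p))).comp DP) p := hp1.comp p hPhi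
  have hp2P : HasFDerivAt (fun q => pd2 u (Phi q))
      (((ContinuousLinearMap.apply ℝ ℝ ((0 : ℝ), (1 : ℝ))).comp
        (fderiv ℝ (fderiv ℝ u) (Phi p))).comp DP) p := hp2.comp p hPhi
  have hP1 : HasFDerivAt (fun q => (Phi q).1) ((ContinuousLinearMap.fst ℝ ℝ ℝ).comp DP) p :=
    (ContinuousLinearMap.fst ℝ ℝ ℝ).hasFDerivAt.comp p hPhi
  have hP2 : HasFDerivAt (fun q => (Phi q).2) ((ContinuousLinearMap.snd ℝ ℝ ℝ).comp DP) p :=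
    (ContinuousLinearMap.snd ℝ ℝ ℝ).hasFDerivAt.comp p hPhi
  have hsneg : HasFDerivAt (fun q : ℝ × ℝ => -Real.sin q.2)
      (-((Real.cos p.2) • ContinuousLinearMap.snd ℝ ℝ ℝ)) p := hs.neg
  have hA := hvP.mul ((hP1.mul hp1P).add (hP2.mul hp2P))
  have hB := hvP.mul ((hsneg.mul hp1P).add (hc.mul hp2P))
  refine ⟨_, _, hA, hB, ?_⟩
  clear hA hB hvP hp1P hp2P hP1 hP2 hp1 hp2 hc hs hsneg hPhi
  simp only [ContinuousLinearMap.add_apply, ContinuousLinearMap.comp_apply,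
    ContinuousLinearMap.smul_apply, ContinuousLinearMap.prod_apply,
    ContinuousLinearMap.coe_fst', ContinuousLinearMap.coe_snd',
    ContinuousLinearMap.apply_apply, ContinuousLinearMap.neg_apply, smul_eq_mul, hDP,
    mul_zero, mul_one, zero_mul, one_mul, add_zero, zero_add, mul_neg, neg_mul, neg_zero]
  rw [clm_apply_pair (fderiv ℝ (fderiv ℝ u) (Phi p)) (Real.cos p.2) (Real.sin p.2),
    clm_apply_pair (fderiv ℝ (fderiv ℝ u) (Phi p)) (-(p.1 * Real.sin p.2)) (p.1 * Real.cos p.2),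
    clm_apply_pair (fderiv ℝ v (Phi p)) (Real.cos p.2) (Real.sin p.2),
    clm_apply_pair (fderiv ℝ v (Phi p)) (-(p.1 * Real.sin p.2)) (p.1 * Real.cos p.2)]
  simp only [ContinuousLinearMap.add_apply, ContinuousLinearMap.smul_apply, smul_eq_mul]
  have hQ1 : (Phi p).1 = p.1 * Real.cos p.2 := rfl
  have hQ2 : (Phi p).2 = p.1 * Real.sin p.2 := rfl
  have hpyth := Real.sin_sq_add_cos_sq p.2
  simp only [pd1, pd2, gradDot, hQ1, hQ2, Pi.mul_apply, Pi.add_apply]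
  linear_combination (p.1 * (fderiv ℝ u (Phi p) (1, 0) * fderiv ℝ v (Phi p) (1, 0)
      + fderiv ℝ u (Phi p) (0, 1) * fderiv ℝ v (Phi p) (0, 1))) * hpyth
    + (p.1 * v (Phi p) * (Real.cos p.2 ^ 2 + Real.sin p.2 ^ 2)) * hharm

lemma continuous_Phi : Continuous Phi := by unfold Phi; fun_prop

lemma contOn_pd1 {u : ℝ × ℝ → ℝ} {W : Set (ℝ × ℝ)} (hWo : IsOpen W)
    (hu : ContDiffOn ℝ 1 u W) : ContinuousOn (pd1 u) W :=
  (ContinuousLinearMap.apply ℝ ℝ ((1 : ℝ), (0 : ℝ))).continuous.comp_continuousOn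
    (hu.continuousOn_fderiv_of_isOpen hWo le_rfl)

lemma contOn_pd2 {u : ℝ × ℝ → ℝ} {W : Set (ℝ × ℝ)} (hWo : IsOpen W)
    (hu : ContDiffOn ℝ 1 u W) : ContinuousOn (pd2 u) W :=
  (ContinuousLinearMap.apply ℝ ℝ ((0 : ℝ), (1 : ℝ))).continuous.comp_continuousOn
    (hu.continuousOn_fderiv_of_isOpen hWo le_rfl)

lemma mapsTo_Phi_closure {α ε R : ℝ} (hα : 0 < α) (hε : 0 < ε) :
    Set.MapsTo Phi (Set.Icc ε R ×ˢ Set.Icc 0 α) (closure (sector α) \ {(0 : ℝ × ℝ)}) := by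
  rintro ⟨r, θ⟩ ⟨hr, hθ⟩
  exact Phi_mem_closure_diff hα (lt_of_lt_of_le hε hr.1) hθ

lemma cont_pieces {α ε R : ℝ} (hα : 0 < α) (hε : 0 < ε) {W : Set (ℝ × ℝ)} (hWo : IsOpen W)
    (hWsub : closure (sector α) \ {(0 : ℝ × ℝ)} ⊆ W) {u v : ℝ × ℝ → ℝ}
    (hu : ContDiffOn ℝ 1 u W) (hv : ContDiffOn ℝ 1 v W) :
    ContinuousOn (Afun u v) (Set.Icc ε R ×ˢ Set.Icc 0 α) ∧
    ContinuousOn (Bfun u v) (Set.Icc ε R ×ˢ Set.Icc 0 α) ∧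
    ContinuousOn (fun p => p.1 * gradDot u v (Phi p)) (Set.Icc ε R ×ˢ Set.Icc 0 α) := by
  have hmaps : Set.MapsTo Phi (Set.Icc ε R ×ˢ Set.Icc 0 α) W :=
    (mapsTo_Phi_closure hα hε).mono_right hWsub
  have hPc : ContinuousOn Phi (Set.Icc ε R ×ˢ Set.Icc 0 α) := continuous_Phi.continuousOn
  have hvP : ContinuousOn (fun p => v (Phi p)) _ := hv.continuousOn.comp hPc hmaps
  have hp1P : ContinuousOn (fun p => pd1 u (Phi p)) _ := (contOn_pd1 hWo hu).comp hPc hmaps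
  have hp2P : ContinuousOn (fun p => pd2 u (Phi p)) _ := (contOn_pd2 hWo hu).comp hPc hmaps
  have hq1P : ContinuousOn (fun p => pd1 v (Phi p)) _ := (contOn_pd1 hWo hv).comp hPc hmaps
  have hq2P : ContinuousOn (fun p => pd2 v (Phi p)) _ := (contOn_pd2 hWo hv).comp hPc hmaps
  have hfst : ContinuousOn (fun p : ℝ × ℝ => (Phi p).1) (Set.Icc ε R ×ˢ Set.Icc 0 α) :=
    (continuous_fst.comp continuous_Phi).continuousOn
  have hsnd : ContinuousOn (fun p : ℝ × ℝ => (Phi p).2) (Set.Icc ε R ×ˢ Set.Icc 0 α) :=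
    (continuous_snd.comp continuous_Phi).continuousOn
  refine ⟨hvP.mul ((hfst.mul hp1P).add (hsnd.mul hp2P)),
    hvP.mul ((((Real.continuous_sin.comp continuous_snd).neg.continuousOn).mul hp1P).add
      (((Real.continuous_cos.comp continuous_snd).continuousOn).mul hp2P)), ?_⟩
  exact continuous_fst.continuousOn.mul ((hp1P.mul hq1P).add (hp2P.mul hq2P))

lemma interior_identity {α : ℝ} (u v : ℝ × ℝ → ℝ)
    (hu_harm : ∀ x ∈ sector α, DifferentiableAt ℝ u x ∧ DifferentiableAt ℝ (fderiv ℝ u) x ∧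
      fderiv ℝ (fderiv ℝ u) x (1, 0) (1, 0) + fderiv ℝ (fderiv ℝ u) x (0, 1) (0, 1) = 0)
    (hv_harm : ∀ x ∈ sector α, DifferentiableAt ℝ v x ∧ DifferentiableAt ℝ (fderiv ℝ v) x ∧
      fderiv ℝ (fderiv ℝ v) x (1, 0) (1, 0) + fderiv ℝ (fderiv ℝ v) x (0, 1) (0, 1) = 0)
    {p : ℝ × ℝ} (hsec : Phi p ∈ sector α) :
    HasFDerivAt (Afun u v) (fderiv ℝ (Afun u v) p) p ∧
    HasFDerivAt (Bfun u v) (fderiv ℝ (Bfun u v) p) p ∧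
    fderiv ℝ (Afun u v) p (1, 0) + fderiv ℝ (Bfun u v) p (0, 1)
      = p.1 * gradDot u v (Phi p) := by
  obtain ⟨LA, LB, hA, hB, heval⟩ := div_step u v p (hu_harm _ hsec).1 (hu_harm _ hsec).2.1
    (hv_harm _ hsec).1 (hu_harm _ hsec).2.2
  rw [hA.fderiv, hB.fderiv]
  exact ⟨hA, hB, heval⟩

lemma ae_uIoc_imp {a b : ℝ} (hab : a ≤ b) {P : ℝ → Prop} (h : ∀ x ∈ Set.Ioo a b, P x) :
    ∀ᵐ x : ℝ, x ∈ Set.uIoc a b → P x := by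
  rw [Set.uIoc_of_le hab]
  have hsub : {x : ℝ | ¬(x ∈ Set.Ioc a b → P x)} ⊆ {b} := by
    intro x hx
    simp only [Set.mem_setOf_eq] at hx
    push_neg at hx
    obtain ⟨hx1, hx2⟩ := hx
    rw [Set.mem_Ioc] at hx1
    by_contra hne
    exact hx2 (h x ⟨hx1.1, lt_of_le_of_ne hx1.2 (by simpa using hne)⟩)
  exact ae_iff.2 (measure_mono_null hsub (by simp))

lemma rect_diff_null {a b c d : ℝ} :
    volume ((Set.Icc a b ×ˢ Set.Icc c d) \ (Set.Ioo a b ×ˢ Set.Ioo c d)) = 0 := by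
  have hsub : (Set.Icc a b ×ˢ Set.Icc c d) \ (Set.Ioo a b ×ˢ Set.Ioo c d) ⊆
      ((Set.Icc a b \ Set.Ioo a b) ×ˢ (Set.univ : Set ℝ)) ∪
        ((Set.univ : Set ℝ) ×ˢ (Set.Icc c d \ Set.Ioo c d)) := by
    rintro ⟨x, y⟩ ⟨⟨hx, hy⟩, hne⟩
    simp only [Set.mem_prod] at hne
    by_cases h1 : x ∈ Set.Ioo a b
    · exact Or.inr ⟨Set.mem_univ _, hy, fun h2 => hne ⟨h1, h2⟩⟩
    · exact Or.inl ⟨⟨hx, h1⟩, Set.mem_univ _⟩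
  refine measure_mono_null hsub (measure_union_null ?_ ?_) <;>
    · rw [Measure.volume_eq_prod, Measure.prod_prod]
      have h0 : ∀ e f : ℝ, volume (Set.Icc e f \ Set.Ioo e f) = 0 := by
        intro e f
        have hsub2 : Set.Icc e f \ Set.Ioo e f ⊆ {e, f} := by
          intro x hx
          obtain ⟨hx1, hx2⟩ := hx
          rw [Set.mem_Icc] at hx1
          rw [Set.mem_Ioo] at hx2
          push_neg at hx2
          rcases lt_or_eq_of_le hx1.1 with h | h
          · exact Or.inr (le_antisymm hx1.2 (hx2 h))
          · exact Or.inl h.symm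
        exact measure_mono_null hsub2
          (((Set.countable_singleton f).insert e).measure_zero _)
      rw [h0]
      simp

lemma green_rect {α ε R : ℝ} (hα : 0 < α) (hαπ : α ≤ Real.pi) (hε : 0 < ε) (hεR : ε ≤ R)
    {W : Set (ℝ × ℝ)} (hWo : IsOpen W) (hWsub : closure (sector α) \ {(0 : ℝ × ℝ)} ⊆ W)
    {u v : ℝ × ℝ → ℝ} (hu : ContDiffOn ℝ 1 u W) (hv : ContDiffOn ℝ 1 v W)
    (hu_harm : ∀ x ∈ sector α, DifferentiableAt ℝ u x ∧ DifferentiableAt ℝ (fderiv ℝ u) x ∧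
      fderiv ℝ (fderiv ℝ u) x (1, 0) (1, 0) + fderiv ℝ (fderiv ℝ u) x (0, 1) (0, 1) = 0)
    (hv_harm : ∀ x ∈ sector α, DifferentiableAt ℝ v x ∧ DifferentiableAt ℝ (fderiv ℝ v) x ∧
      fderiv ℝ (fderiv ℝ v) x (1, 0) (1, 0) + fderiv ℝ (fderiv ℝ v) x (0, 1) (0, 1) = 0) :
    (∫ r in ε..R, ∫ θ in (0:ℝ)..α, (r, θ).1 * gradDot u v (Phi (r, θ)))
      = (((∫ r in ε..R, Bfun u v (r, α)) - ∫ r in ε..R, Bfun u v (r, 0))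
          + ∫ θ in (0:ℝ)..α, Afun u v (R, θ)) - ∫ θ in (0:ℝ)..α, Afun u v (ε, θ) := by
  have hsect : ∀ p : ℝ × ℝ, p ∈ Set.Ioo ε R ×ˢ Set.Ioo 0 α → Phi p ∈ sector α := by
    rintro ⟨r, θ⟩ ⟨hr, hθ⟩
    exact Phi_mem_sector (lt_trans hε hr.1) hθ.1 hθ.2
  have hK := cont_pieces (ε := ε) (R := R) hα hε hWo hWsub hu hv
  -- integrability of the divergence over the closed rectangle
  have hDK : IntegrableOn (fun p => p.1 * gradDot u v (Phi p))
      (Set.Icc ε R ×ˢ Set.Icc 0 α) volume :=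
    hK.2.2.integrableOn_compact (isCompact_Icc.prod isCompact_Icc)
  have hmeasK : MeasurableSet (Set.Icc ε R ×ˢ Set.Icc (0:ℝ) α) :=
    (measurableSet_Icc.prod measurableSet_Icc)
  have hT : ∀ᵐ p ∂(volume.restrict (Set.Icc ε R ×ˢ Set.Icc (0:ℝ) α)),
      p ∈ Set.Ioo ε R ×ˢ Set.Ioo 0 α := by
    rw [ae_restrict_iff' hmeasK]
    refine ae_iff.2 (measure_mono_null ?_ (rect_diff_null (a := ε) (b := R) (c := 0) (d := α)))
    intro x hx
    simp only [Set.mem_setOf_eq] at hx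
    push_neg at hx
    exact ⟨hx.1, hx.2⟩
  have hae : (fun p => fderiv ℝ (Afun u v) p (1, 0) + fderiv ℝ (Bfun u v) p (0, 1))
      =ᵐ[volume.restrict (Set.Icc ε R ×ˢ Set.Icc (0:ℝ) α)]
      (fun p => p.1 * gradDot u v (Phi p)) := by
    filter_upwards [hT] with p hp
    exact (interior_identity u v hu_harm hv_harm (hsect p hp)).2.2
  have Hi : IntegrableOn (fun p => fderiv ℝ (Afun u v) p (1, 0) + fderiv ℝ (Bfun u v) p (0, 1))
      (Set.Icc ε R ×ˢ Set.Icc (0:ℝ) α) volume := hDK.congr hae.symm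
  have hmain := integral2_divergence_prod_of_hasFDerivAt_off_countable
    (Afun u v) (Bfun u v) (fun p => fderiv ℝ (Afun u v) p) (fun p => fderiv ℝ (Bfun u v) p)
    ε 0 R α ∅ Set.countable_empty
    (by rw [Set.uIcc_of_le hεR, Set.uIcc_of_le hα.le]; exact hK.1)
    (by rw [Set.uIcc_of_le hεR, Set.uIcc_of_le hα.le]; exact hK.2.1)
    (by
      rw [min_eq_left hεR, max_eq_right hεR, min_eq_left hα.le, max_eq_right hα.le]
      intro p hp
      exact (interior_identity u v hu_harm hv_harm (hsect p hp.1)).1)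
    (by
      rw [min_eq_left hεR, max_eq_right hεR, min_eq_left hα.le, max_eq_right hα.le]
      intro p hp
      exact (interior_identity u v hu_harm hv_harm (hsect p hp.1)).2.1)
    (by rw [Set.uIcc_of_le hεR, Set.uIcc_of_le hα.le]; exact Hi)
  rw [← hmain]
  apply intervalIntegral.integral_congr_ae
  filter_upwards [ae_uIoc_imp hεR (fun r hr => hr)] with r hrmem
  intro hr
  apply intervalIntegral.integral_congr_ae
  filter_upwards [ae_uIoc_imp hα.le (fun θ hθ => hθ)] with θ hθmem
  intro hθ
  exact ((interior_identity u v hu_harm hv_harm (hsect (r, θ) ⟨hrmem hr, hθmem hθ⟩)).2.2).symm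

lemma polar_sectorAnn {α ε R : ℝ} (hα : 0 < α) (hαπ : α ≤ Real.pi) (hε : 0 < ε) (hεR : ε ≤ R)
    (g : ℝ × ℝ → ℝ)
    (hcont : ContinuousOn (fun p => p.1 * g (Phi p)) (Set.Icc ε R ×ˢ Set.Icc 0 α)) :
    ∫ x in sectorAnn α ε R, g x = ∫ r in ε..R, ∫ θ in (0:ℝ)..α, (r, θ).1 * g (Phi (r, θ)) := by
  set h : ℝ × ℝ → ℝ := fun p => p.1 * g (Phi p) with hh
  have hmeasAnn : MeasurableSet (sectorAnn α ε R) := (isOpen_sectorAnn hαπ hε.le).measurableSet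
  have hrectmeas : MeasurableSet (Set.Ioo ε R ×ˢ Set.Ioo (0:ℝ) α) :=
    (measurableSet_Ioo.prod measurableSet_Ioo)
  have hsub : Set.Ioo ε R ×ˢ Set.Ioo (0:ℝ) α ⊆ polarCoord.target := by
    rintro ⟨r, θ⟩ ⟨hr, hθ⟩
    rw [polarCoord_target]
    exact ⟨lt_trans hε hr.1, by constructor <;> [linarith [Real.pi_pos, hθ.1]; linarith [hθ.2]]⟩
  have h1 : Set.EqOn (fun p : ℝ × ℝ => p.1 • (Set.indicator (sectorAnn α ε R) g)
      (polarCoord.symm p)) (Set.indicator (Set.Ioo ε R ×ˢ Set.Ioo 0 α) h) polarCoord.target := by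
    intro p hp
    beta_reduce
    by_cases hmem : p ∈ Set.Ioo ε R ×ˢ Set.Ioo (0:ℝ) α
    · rw [Set.indicator_of_mem hmem, ← Phi_eq_symm,
        Set.indicator_of_mem ((Phi_mem_sectorAnn_iff hαπ hε.le hp).2 hmem)]
      simp [hh]
    · rw [Set.indicator_of_notMem hmem, ← Phi_eq_symm,
        Set.indicator_of_notMem (fun hc => hmem ((Phi_mem_sectorAnn_iff hαπ hε.le hp).1 hc))]
      simp
  have hint : IntegrableOn h (Set.Ioo ε R ×ˢ Set.Ioo (0:ℝ) α) (volume.prod volume) := by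
    rw [← Measure.volume_eq_prod]
    exact (hcont.integrableOn_compact (isCompact_Icc.prod isCompact_Icc)).mono_set
      (Set.prod_mono Set.Ioo_subset_Icc_self Set.Ioo_subset_Icc_self)
  calc ∫ x in sectorAnn α ε R, g x
      = ∫ p, Set.indicator (sectorAnn α ε R) g p := (integral_indicator hmeasAnn).symm
    _ = ∫ p in polarCoord.target, p.1 • (Set.indicator (sectorAnn α ε R) g)
          (polarCoord.symm p) := (integral_comp_polarCoord_symm _).symm
    _ = ∫ p in polarCoord.target, Set.indicator (Set.Ioo ε R ×ˢ Set.Ioo 0 α) h p :=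
        setIntegral_congr_fun polarCoord.open_target.measurableSet h1
    _ = ∫ p in polarCoord.target ∩ Set.Ioo ε R ×ˢ Set.Ioo 0 α, h p :=
        setIntegral_indicator hrectmeas
    _ = ∫ p in Set.Ioo ε R ×ˢ Set.Ioo (0:ℝ) α, h p := by
        rw [Set.inter_eq_self_of_subset_right hsub]
    _ = ∫ r in Set.Ioo ε R, ∫ θ in Set.Ioo (0:ℝ) α, h (r, θ) := by
        rw [Measure.volume_eq_prod]
        exact setIntegral_prod _ hint
    _ = ∫ r in ε..R, ∫ θ in (0:ℝ)..α, h (r, θ) := by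
        rw [intervalIntegral.integral_of_le hεR, ← integral_Ioc_eq_integral_Ioo]
        apply setIntegral_congr_fun measurableSet_Ioc
        intro r _
        beta_reduce
        rw [intervalIntegral.integral_of_le hα.le, ← integral_Ioc_eq_integral_Ioo]

lemma Bfun_zero (u v : ℝ × ℝ → ℝ) (r : ℝ) : Bfun u v (r, 0) = v (r, 0) * pd2 u (r, 0) := by
  simp [Bfun, Phi]

lemma Bfun_alpha {α : ℝ} {u : ℝ × ℝ → ℝ} (hu_neu : NeumannOnGamma2 α u) (v : ℝ × ℝ → ℝ)
    {r : ℝ} (hr : 0 < r) : Bfun u v (r, α) = 0 := by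
  have h2 : -Real.sin α * pd1 u (Phi (r, α)) + Real.cos α * pd2 u (Phi (r, α)) = 0 :=
    hu_neu r hr
  show v (Phi (r, α)) * (-Real.sin α * pd1 u (Phi (r, α)) + Real.cos α * pd2 u (Phi (r, α))) = 0
  rw [h2, mul_zero]

lemma Afun_decay_bound {α C δ : ℝ} {u v : ℝ × ℝ → ℝ} (hα : 0 < α)
    (hdec : ∀ x ∈ closure (sector α) \ {(0 : ℝ × ℝ)},
      (Real.sqrt (x.1 ^ 2 + x.2 ^ 2) ≤ 1 →
        |u x| * gradNorm v x + |v x| * gradNorm u x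
          ≤ C * Real.sqrt (x.1 ^ 2 + x.2 ^ 2) ^ (δ - 1)) ∧
      (1 ≤ Real.sqrt (x.1 ^ 2 + x.2 ^ 2) →
        |u x| * gradNorm v x + |v x| * gradNorm u x
          ≤ C * Real.sqrt (x.1 ^ 2 + x.2 ^ 2) ^ (-δ - 1)))
    {r θ : ℝ} (hr : 0 < r) (hθ : θ ∈ Set.Icc 0 α) :
    (r ≤ 1 → |Afun u v (r, θ)| ≤ C * r ^ δ) ∧ (1 ≤ r → |Afun u v (r, θ)| ≤ C * r ^ (-δ)) := by
  have hx := Phi_mem_closure_diff hα hr hθ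
  have hnorm : Real.sqrt ((Phi (r, θ)).1 ^ 2 + (Phi (r, θ)).2 ^ 2) = r := norm_Phi r θ hr.le
  have hAb := Afun_bound u v r θ hr.le
  have hd := hdec _ hx
  rw [hnorm] at hd
  constructor
  · intro h1
    have := hd.1 h1
    calc |Afun u v (r, θ)| ≤ r * (C * r ^ (δ - 1)) := le_trans hAb
          (mul_le_mul_of_nonneg_left this hr.le)
      _ = C * r ^ δ := by
          rw [Real.rpow_sub hr, Real.rpow_one]
          field_simp
  · intro h1
    have := hd.2 h1
    calc |Afun u v (r, θ)| ≤ r * (C * r ^ (-δ - 1)) := le_trans hAb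
          (mul_le_mul_of_nonneg_left this hr.le)
      _ = C * r ^ (-δ) := by
          rw [Real.rpow_sub hr, Real.rpow_one]
          field_simp

lemma green_half (α : ℝ) (hα₀ : 0 < α) (hα₁ : α ≤ Real.pi)
    (u v : ℝ × ℝ → ℝ)
    (hu_smooth : ∃ U : Set (ℝ × ℝ), IsOpen U ∧
      closure (sector α) \ {(0 : ℝ × ℝ)} ⊆ U ∧ ContDiffOn ℝ 1 u U)
    (hv_smooth : ∃ U : Set (ℝ × ℝ), IsOpen U ∧
      closure (sector α) \ {(0 : ℝ × ℝ)} ⊆ U ∧ ContDiffOn ℝ 1 v U)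
    (hu_harm : HarmonicOnSector α u) (hv_harm : HarmonicOnSector α v)
    (hu_neu : NeumannOnGamma2 α u)
    (hdecay : ∃ C : ℝ, 0 < C ∧ ∃ δ : ℝ, 0 < δ ∧
      ∀ x ∈ closure (sector α) \ {(0 : ℝ × ℝ)},
        (Real.sqrt (x.1 ^ 2 + x.2 ^ 2) ≤ 1 →
          |u x| * gradNorm v x + |v x| * gradNorm u x
            ≤ C * Real.sqrt (x.1 ^ 2 + x.2 ^ 2) ^ (δ - 1)) ∧
        (1 ≤ Real.sqrt (x.1 ^ 2 + x.2 ^ 2) →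
          |u x| * gradNorm v x + |v x| * gradNorm u x
            ≤ C * Real.sqrt (x.1 ^ 2 + x.2 ^ 2) ^ (-δ - 1)))
    (hint : IntegrableOn (gradDot u v) (sector α) volume)
    (hint1 : IntegrableOn (fun x₁ : ℝ => v (x₁, 0) * pd2 u (x₁, 0)) (Set.Ioi 0) volume) :
    ∫ x in sector α, gradDot u v x
      = -∫ x₁ in Set.Ioi (0 : ℝ), v (x₁, 0) * pd2 u (x₁, 0) := by
  obtain ⟨Uu, hUuo, hUusub, hu⟩ := hu_smooth
  obtain ⟨Uv, hUvo, hUvsub, hv⟩ := hv_smooth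
  obtain ⟨C, hC, δ, hδ, hdec⟩ := hdecay
  set W := Uu ∩ Uv with hW
  have hWo : IsOpen W := hUuo.inter hUvo
  have hWsub : closure (sector α) \ {(0 : ℝ × ℝ)} ⊆ W := Set.subset_inter hUusub hUvsub
  have huW : ContDiffOn ℝ 1 u W := hu.mono Set.inter_subset_left
  have hvW : ContDiffOn ℝ 1 v W := hv.mono Set.inter_subset_right
  set e : ℕ → ℝ := fun n => ((n : ℝ) + 1)⁻¹ with he
  set Rn : ℕ → ℝ := fun n => (n : ℝ) + 1 with hRn
  have hen : ∀ n, 0 < e n := fun n => by positivity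
  have hRn1 : ∀ n, (1 : ℝ) ≤ Rn n := fun n => by simp [hRn]
  have he1 : ∀ n, e n ≤ 1 := fun n => by
    rw [he]; simp only
    rw [inv_le_one_iff₀]; right; simp
  have heR : ∀ n, e n ≤ Rn n := fun n => le_trans (he1 n) (hRn1 n)
  -- the key identity for each n
  have key : ∀ n : ℕ, ∫ x in sectorAnn α (e n) (Rn n), gradDot u v x
      = ((0 - ∫ r in (e n)..(Rn n), v (r, 0) * pd2 u (r, 0))
          + ∫ θ in (0:ℝ)..α, Afun u v (Rn n, θ)) - ∫ θ in (0:ℝ)..α, Afun u v (e n, θ) := by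
    intro n
    have hpolar := polar_sectorAnn hα₀ hα₁ (hen n) (heR n) (gradDot u v)
      (cont_pieces hα₀ (hen n) hWo hWsub huW hvW).2.2
    have hrect := green_rect hα₀ hα₁ (hen n) (heR n) hWo hWsub huW hvW hu_harm hv_harm
    rw [hpolar, hrect]
    have hBα : ∫ r in (e n)..(Rn n), Bfun u v (r, α) = 0 := by
      rw [intervalIntegral.integral_congr (g := fun _ => (0:ℝ))
        (fun r hr => Bfun_alpha hu_neu v (lt_of_lt_of_le (hen n)
          (by rw [Set.uIcc_of_le (heR n)] at hr; exact hr.1)))]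
      simp
    have hB0 : (fun r => Bfun u v (r, 0)) = fun r => v (r, 0) * pd2 u (r, 0) :=
      funext fun r => Bfun_zero u v r
    rw [hBα, hB0]
  -- limit of the area integrals
  have hmeasAnn : ∀ n : ℕ, MeasurableSet (sectorAnn α (e n) (Rn n)) := fun n =>
    (isOpen_sectorAnn hα₁ (hen n).le).measurableSet
  have hLHS : Tendsto (fun n : ℕ => ∫ x in sectorAnn α (e n) (Rn n), gradDot u v x) atTop
      (nhds (∫ x in sector α, gradDot u v x)) := by
    have := tendsto_setIntegral_of_monotone hmeasAnn sectorAnn_mono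
      (by rw [iUnion_sectorAnn]; exact hint)
    rwa [iUnion_sectorAnn] at this
  -- limit of the Γ₁ boundary integrals
  have hIocmono : Monotone (fun n : ℕ => Set.Ioc (e n) (Rn n)) := by
    intro m n hmn
    have h1 : (m : ℝ) + 1 ≤ (n : ℝ) + 1 := by exact_mod_cast by omega
    exact Set.Ioc_subset_Ioc (by exact inv_anti₀ (by positivity) h1) h1
  have hIocU : (⋃ n : ℕ, Set.Ioc (e n) (Rn n)) = Set.Ioi (0:ℝ) := by
    ext x
    simp only [Set.mem_iUnion, Set.mem_Ioc, Set.mem_Ioi]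
    constructor
    · rintro ⟨n, h1, -⟩
      exact lt_trans (hen n) h1
    · intro hx
      obtain ⟨n, hn⟩ := exists_nat_gt (max x x⁻¹)
      refine ⟨n, ?_, ?_⟩
      · show ((n : ℝ) + 1)⁻¹ < x
        rw [inv_lt_comm₀ (by positivity) hx]
        calc x⁻¹ ≤ max x x⁻¹ := le_max_right _ _
          _ < n := hn
          _ ≤ (n : ℝ) + 1 := by linarith
      · show x ≤ (n : ℝ) + 1
        calc x ≤ max x x⁻¹ := le_max_left _ _
          _ ≤ (n : ℝ) + 1 := by linarith
  have hB : Tendsto (fun n : ℕ => ∫ r in (e n)..(Rn n), v (r, 0) * pd2 u (r, 0)) atTop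
      (nhds (∫ x₁ in Set.Ioi (0:ℝ), v (x₁, 0) * pd2 u (x₁, 0))) := by
    have := tendsto_setIntegral_of_monotone (fun n => measurableSet_Ioc) hIocmono
      (by rw [hIocU]; exact hint1)
    rw [hIocU] at this
    refine this.congr fun n => ?_
    rw [intervalIntegral.integral_of_le (heR n)]
  -- the small boundary terms
  have hzero : Tendsto (fun n : ℕ => C * ((n : ℝ) + 1) ^ (-δ) * |α - 0|) atTop (nhds 0) := by
    have h1 : Tendsto (fun n : ℕ => ((n : ℝ) + 1)) atTop atTop :=
      tendsto_atTop_add_const_right _ 1 tendsto_natCast_atTop_atTop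
    have h2 : Tendsto (fun n : ℕ => ((n : ℝ) + 1) ^ (-δ)) atTop (nhds 0) :=
      (tendsto_rpow_neg_atTop hδ).comp h1
    simpa using (h2.const_mul C).mul_const |α - 0|
  have hAe : Tendsto (fun n : ℕ => ∫ θ in (0:ℝ)..α, Afun u v (e n, θ)) atTop (nhds 0) := by
    refine squeeze_zero_norm (fun n => ?_) hzero
    have hb : ∀ θ ∈ Set.uIoc (0:ℝ) α, ‖Afun u v (e n, θ)‖ ≤ C * ((n : ℝ) + 1) ^ (-δ) := by
      intro θ hθ
      rw [Set.uIoc_of_le hα₀.le] at hθ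
      have := (Afun_decay_bound hα₀ hdec (hen n) ⟨hθ.1.le, hθ.2⟩).1 (he1 n)
      rw [Real.norm_eq_abs]
      refine le_trans this (le_of_eq ?_)
      rw [he]
      simp only
      rw [Real.inv_rpow (by positivity), ← Real.rpow_neg (by positivity)]
    exact intervalIntegral.norm_integral_le_of_norm_le_const hb
  have hAR : Tendsto (fun n : ℕ => ∫ θ in (0:ℝ)..α, Afun u v (Rn n, θ)) atTop (nhds 0) := by
    refine squeeze_zero_norm (fun n => ?_) hzero
    have hb : ∀ θ ∈ Set.uIoc (0:ℝ) α, ‖Afun u v (Rn n, θ)‖ ≤ C * ((n : ℝ) + 1) ^ (-δ) := by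
      intro θ hθ
      rw [Set.uIoc_of_le hα₀.le] at hθ
      have := (Afun_decay_bound hα₀ hdec (lt_of_lt_of_le one_pos (hRn1 n))
        ⟨hθ.1.le, hθ.2⟩).2 (hRn1 n)
      rw [Real.norm_eq_abs]
      exact this
    exact intervalIntegral.norm_integral_le_of_norm_le_const hb
  -- combine
  have hcomb : Tendsto (fun n : ℕ => ((0 - ∫ r in (e n)..(Rn n), v (r, 0) * pd2 u (r, 0))
      + ∫ θ in (0:ℝ)..α, Afun u v (Rn n, θ)) - ∫ θ in (0:ℝ)..α, Afun u v (e n, θ)) atTop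
      (nhds (((0 - ∫ x₁ in Set.Ioi (0:ℝ), v (x₁, 0) * pd2 u (x₁, 0)) + 0) - 0)) :=
    ((tendsto_const_nhds.sub hB).add hAR).sub hAe
  have h2 := hcomb.congr fun n => (key n).symm
  have := tendsto_nhds_unique hLHS h2
  rw [this]
  ring

/-- Green's identity in the sector, expressing the symmetry of the
Dirichlet-to-Neumann map: for harmonic `u, v` with zero Neumann data on `Γ₂`,
suitable decay at the corner and at infinity, and the relevant integrabilities,
`∫_G ∇u·∇v = −∫₀^∞ v(x₁,0) ∂u/∂x₂(x₁,0) dx₁ = −∫₀^∞ u(x₁,0) ∂v/∂x₂(x₁,0) dx₁`. -/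
theorem stmt_9 (α : ℝ) (hα₀ : 0 < α) (hα₁ : α ≤ Real.pi)
    (u v : ℝ × ℝ → ℝ)
    (hu_smooth : ∃ U : Set (ℝ × ℝ), IsOpen U ∧
      closure (sector α) \ {(0 : ℝ × ℝ)} ⊆ U ∧ ContDiffOn ℝ 1 u U)
    (hv_smooth : ∃ U : Set (ℝ × ℝ), IsOpen U ∧
      closure (sector α) \ {(0 : ℝ × ℝ)} ⊆ U ∧ ContDiffOn ℝ 1 v U)
    (hu_harm : HarmonicOnSector α u) (hv_harm : HarmonicOnSector α v)
    (hu_neu : NeumannOnGamma2 α u) (hv_neu : NeumannOnGamma2 α v)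
    (hdecay : ∃ C : ℝ, 0 < C ∧ ∃ δ : ℝ, 0 < δ ∧
      ∀ x ∈ closure (sector α) \ {(0 : ℝ × ℝ)},
        (Real.sqrt (x.1 ^ 2 + x.2 ^ 2) ≤ 1 →
          |u x| * gradNorm v x + |v x| * gradNorm u x
            ≤ C * Real.sqrt (x.1 ^ 2 + x.2 ^ 2) ^ (δ - 1)) ∧
        (1 ≤ Real.sqrt (x.1 ^ 2 + x.2 ^ 2) →
          |u x| * gradNorm v x + |v x| * gradNorm u x
            ≤ C * Real.sqrt (x.1 ^ 2 + x.2 ^ 2) ^ (-δ - 1)))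
    (hint : IntegrableOn (gradDot u v) (sector α) volume)
    (hint1 : IntegrableOn (fun x₁ : ℝ => v (x₁, 0) * pd2 u (x₁, 0)) (Set.Ioi 0) volume)
    (hint2 : IntegrableOn (fun x₁ : ℝ => u (x₁, 0) * pd2 v (x₁, 0)) (Set.Ioi 0) volume) :
    ∫ x in sector α, gradDot u v x
        = -∫ x₁ in Set.Ioi (0 : ℝ), v (x₁, 0) * pd2 u (x₁, 0) ∧
    ∫ x in sector α, gradDot u v x
        = -∫ x₁ in Set.Ioi (0 : ℝ), u (x₁, 0) * pd2 v (x₁, 0) := by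
  refine ⟨green_half α hα₀ hα₁ u v hu_smooth hv_smooth hu_harm hv_harm hu_neu hdecay
    hint hint1, ?_⟩
  have hgd : gradDot u v = gradDot v u := funext fun x => by unfold gradDot; ring
  have hdecay' : ∃ C : ℝ, 0 < C ∧ ∃ δ : ℝ, 0 < δ ∧
      ∀ x ∈ closure (sector α) \ {(0 : ℝ × ℝ)},
        (Real.sqrt (x.1 ^ 2 + x.2 ^ 2) ≤ 1 →
          |v x| * gradNorm u x + |u x| * gradNorm v x
            ≤ C * Real.sqrt (x.1 ^ 2 + x.2 ^ 2) ^ (δ - 1)) ∧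
        (1 ≤ Real.sqrt (x.1 ^ 2 + x.2 ^ 2) →
          |v x| * gradNorm u x + |u x| * gradNorm v x
            ≤ C * Real.sqrt (x.1 ^ 2 + x.2 ^ 2) ^ (-δ - 1)) := by
    obtain ⟨C, hC, δ, hδ, hd⟩ := hdecay
    exact ⟨C, hC, δ, hδ, fun x hx =>
      ⟨fun h => by rw [add_comm]; exact (hd x hx).1 h,
       fun h => by rw [add_comm]; exact (hd x hx).2 h⟩⟩
  have h2 := green_half α hα₀ hα₁ v u hv_smooth hu_smooth hv_harm hu_harm hv_neu hdecay'
    (by rwa [← hgd]) hint2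
  rw [hgd]
  exact h2
end

section
/- Let α ∈ (0, π] and let G, Γ₁, Γ₂ be as in the context. Let u : ℝ² → ℝ be continuously differentiable on an open set containing cl(G) \ {0}, harmonic on G, and satisfy −sin α · ∂u/∂x₁ + cos α · ∂u/∂x₂ = 0 at every point of Γ₂. Assume there exist constants C > 0 and δ > 0 such that for all x ∈ cl(G) \ {0}: |u(x)|·|∇u(x)| ≤ C|x|^{δ−1} whenever 0 < |x| ≤ 1, and ≤ C|x|^{−δ−1} whenever |x| ≥ 1; assume |∇u|² is integrable on G and x₁ ↦ u(x₁, 0)·∂u/∂x₂(x₁, 0) is integrable on (0, ∞). Then −∫_0^∞ u(x₁, 0)·∂u/∂x₂(x₁, 0) dx₁ = ∫_G |∇u(x)|² dx ≥ 0, and this quantity is strictly positive unless ∇u vanishes identically on G. -/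
open MeasureTheory

/-- Squared Euclidean norm `|∇u(x)|²` of the gradient. -/
noncomputable def gradSq (u : ℝ × ℝ → ℝ) (x : ℝ × ℝ) : ℝ :=
  pd1 u x ^ 2 + pd2 u x ^ 2

open Set Topology Filter

variable {α' : ℝ}

variable {α : ℝ}

lemma polar_symm_apply (p : ℝ × ℝ) :
    polarCoord.symm p = (p.1 * Real.cos p.2, p.1 * Real.sin p.2) := rfl

lemma sector_eq_image :
    sector α = polarCoord.symm '' (Set.Ioi 0 ×ˢ Set.Ioo 0 α) := by
  ext x
  constructor
  · rintro ⟨r, θ, hr, hθ0, hθα, rfl⟩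
    exact ⟨(r, θ), ⟨hr, hθ0, hθα⟩, rfl⟩
  · rintro ⟨⟨r, θ⟩, ⟨hr, hθ0, hθα⟩, rfl⟩
    exact ⟨r, θ, hr, hθ0, hθα, rfl⟩

lemma prod_subset_target (hα : α ≤ Real.pi) :
    (Set.Ioi 0 ×ˢ Set.Ioo 0 α : Set (ℝ × ℝ)) ⊆ polarCoord.target := by
  rintro ⟨r, θ⟩ ⟨hr, hθ0, hθα⟩
  refine ⟨hr, ?_, lt_of_lt_of_le hθα hα⟩
  · have := Real.pi_pos; dsimp at hθ0 ⊢; linarith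

lemma sector_isOpen (hα : α ≤ Real.pi) : IsOpen (sector α) := by
  rw [sector_eq_image]
  exact polarCoord.symm.isOpen_image_of_subset_source
    (isOpen_Ioi.prod isOpen_Ioo)
    (by rw [OpenPartialHomeomorph.symm_source]; exact prod_subset_target hα)

lemma mem_sector_iff (hα : α ≤ Real.pi) {p : ℝ × ℝ} (hp : p ∈ polarCoord.target) :
    polarCoord.symm p ∈ sector α ↔ p.2 ∈ Set.Ioo 0 α := by
  constructor
  · intro h
    rw [sector_eq_image] at h
    obtain ⟨q, hq, hqe⟩ := h
    have : q = p := by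
      apply polarCoord.symm.injOn ?_ ?_ hqe
      · rw [OpenPartialHomeomorph.symm_source]; exact prod_subset_target hα hq
      · rwa [OpenPartialHomeomorph.symm_source]
    rw [← this]; exact hq.2
  · intro h
    exact ⟨p.1, p.2, hp.1, h.1, h.2, rfl⟩

lemma norm_polar {r : ℝ} (hr : 0 < r) (θ : ℝ) :
    Real.sqrt ((r * Real.cos θ) ^ 2 + (r * Real.sin θ) ^ 2) = r := by
  have : (r * Real.cos θ) ^ 2 + (r * Real.sin θ) ^ 2 = r ^ 2 := by
    have := Real.sin_sq_add_cos_sq θ; nlinarith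
  rw [this, Real.sqrt_sq hr.le]

lemma polar_ne_zero {r : ℝ} (hr : 0 < r) (θ : ℝ) :
    ((r * Real.cos θ, r * Real.sin θ) : ℝ × ℝ) ≠ 0 := by
  intro h
  have h1 : r * Real.cos θ = 0 := congrArg Prod.fst h
  have h2 : r * Real.sin θ = 0 := congrArg Prod.snd h
  have h3 : Real.cos θ = 0 := (mul_eq_zero.1 h1).resolve_left hr.ne'
  have h4 : Real.sin θ = 0 := (mul_eq_zero.1 h2).resolve_left hr.ne'
  have := Real.sin_sq_add_cos_sq θ
  rw [h3, h4] at this; norm_num at this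

lemma continuous_polar_symm : Continuous (polarCoord.symm : ℝ × ℝ → ℝ × ℝ) := by
  have : (polarCoord.symm : ℝ × ℝ → ℝ × ℝ)
      = fun p : ℝ × ℝ => ((p.1 * Real.cos p.2, p.1 * Real.sin p.2) : ℝ × ℝ) := rfl
  rw [this]; fun_prop

lemma mem_closure_sector (hα0 : 0 < α) {r θ : ℝ} (hr : 0 < r) (hθ0 : 0 ≤ θ) (hθα : θ ≤ α) :
    ((r * Real.cos θ, r * Real.sin θ) : ℝ × ℝ) ∈ closure (sector α) := by
  have h1 : ((r, θ) : ℝ × ℝ) ∈ closure (Set.Ioi (0:ℝ) ×ˢ Set.Ioo 0 α) := by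
    rw [closure_prod_eq, closure_Ioi, closure_Ioo hα0.ne]
    exact ⟨hr.le, hθ0, hθα⟩
  have h2 := image_closure_subset_closure_image
    (f := (polarCoord.symm : ℝ × ℝ → ℝ × ℝ)) (s := Set.Ioi (0:ℝ) ×ˢ Set.Ioo 0 α)
    continuous_polar_symm
  rw [sector_eq_image]
  exact h2 ⟨(r, θ), h1, rfl⟩

lemma sector_snd_pos (hα : α ≤ Real.pi) {x : ℝ × ℝ} (hx : x ∈ sector α) : 0 < x.2 := by
  obtain ⟨r, θ, hr, hθ0, hθα, rfl⟩ := hx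
  exact mul_pos hr (Real.sin_pos_of_pos_of_lt_pi hθ0 (lt_of_lt_of_le hθα hα))

lemma sector_subset_cl (hα : α ≤ Real.pi) :
    sector α ⊆ closure (sector α) \ {(0 : ℝ × ℝ)} := fun x hx =>
  ⟨subset_closure hx, by
    intro h
    have := sector_snd_pos hα hx
    rw [Set.mem_singleton_iff] at h
    rw [h] at this; exact lt_irrefl _ this⟩

noncomputable def F1 (u : ℝ × ℝ → ℝ) (p : ℝ × ℝ) : ℝ :=
  p.1 * (u (polarCoord.symm p) * fderiv ℝ u (polarCoord.symm p) (Real.cos p.2, Real.sin p.2))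

noncomputable def F2 (u : ℝ × ℝ → ℝ) (p : ℝ × ℝ) : ℝ :=
  u (polarCoord.symm p) * fderiv ℝ u (polarCoord.symm p) (-Real.sin p.2, Real.cos p.2)

lemma eval_pair (A : ℝ × ℝ →L[ℝ] ℝ) (x y : ℝ) :
    A (x, y) = x * A (1, 0) + y * A (0, 1) := by
  have h : ((x, y) : ℝ × ℝ) = x • ((1 : ℝ), (0 : ℝ)) + y • ((0 : ℝ), (1 : ℝ)) := by
    simp [Prod.ext_iff]
  rw [h, map_add, _root_.map_smul, _root_.map_smul]; simp

lemma eval2_pair (B : ℝ × ℝ →L[ℝ] (ℝ × ℝ →L[ℝ] ℝ)) (x y z w : ℝ) :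
    B (x, y) (z, w) = x * (z * B (1,0) (1,0) + w * B (1,0) (0,1))
      + y * (z * B (0,1) (1,0) + w * B (0,1) (0,1)) := by
  have h : ((x, y) : ℝ × ℝ) = x • ((1 : ℝ), (0 : ℝ)) + y • ((0 : ℝ), (1 : ℝ)) := by
    simp [Prod.ext_iff]
  rw [h, map_add, _root_.map_smul, _root_.map_smul]
  simp only [ContinuousLinearMap.add_apply, ContinuousLinearMap.smul_apply, smul_eq_mul]
  rw [eval_pair (B (1,0)) z w, eval_pair (B (0,1)) z w]

lemma key_deriv (u : ℝ × ℝ → ℝ) (p : ℝ × ℝ)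
    (hud : DifferentiableAt ℝ u (polarCoord.symm p))
    (hvd : DifferentiableAt ℝ (fderiv ℝ u) (polarCoord.symm p)) :
    ∃ D1 D2 : ℝ × ℝ →L[ℝ] ℝ, HasFDerivAt (F1 u) D1 p ∧ HasFDerivAt (F2 u) D2 p ∧
      D1 (1, 0) + D2 (0, 1) =
        p.1 * (fderiv ℝ u (polarCoord.symm p) (1,0) ^ 2 + fderiv ℝ u (polarCoord.symm p) (0,1) ^ 2)
        + p.1 * u (polarCoord.symm p) *
          (fderiv ℝ (fderiv ℝ u) (polarCoord.symm p) (1,0) (1,0)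
            + fderiv ℝ (fderiv ℝ u) (polarCoord.symm p) (0,1) (0,1)) := by
  have hP := hasFDerivAt_polarCoord_symm p
  have h1 := hud.hasFDerivAt.comp p hP
  have h2 := hvd.hasFDerivAt.comp p hP
  have hsnd : HasFDerivAt (fun q : ℝ × ℝ => q.2) (ContinuousLinearMap.snd ℝ ℝ ℝ) p :=
    hasFDerivAt_snd
  have her : HasFDerivAt (fun q : ℝ × ℝ => ((Real.cos q.2, Real.sin q.2) : ℝ × ℝ)) _ p :=
    HasFDerivAt.prodMk
      ((Real.hasDerivAt_cos p.2).comp_hasFDerivAt p hsnd)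
      ((Real.hasDerivAt_sin p.2).comp_hasFDerivAt p hsnd)
  have het : HasFDerivAt (fun q : ℝ × ℝ => ((-Real.sin q.2, Real.cos q.2) : ℝ × ℝ)) _ p :=
    HasFDerivAt.prodMk
      (((Real.hasDerivAt_sin p.2).comp_hasFDerivAt p hsnd).neg)
      ((Real.hasDerivAt_cos p.2).comp_hasFDerivAt p hsnd)
  have h3 := h2.clm_apply her
  have h4 := h2.clm_apply het
  have hF1 := hasFDerivAt_fst.mul (𝕜 := ℝ) (h1.mul h3)
  have hF2 := h1.mul h4
  have hF1' : HasFDerivAt (F1 u) _ p := hF1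
  have hF2' : HasFDerivAt (F2 u) _ p := hF2
  refine ⟨_, _, hF1', hF2', ?_⟩
  simp only [ContinuousLinearMap.add_apply, ContinuousLinearMap.smul_apply,
    ContinuousLinearMap.comp_apply, ContinuousLinearMap.flip_apply,
    ContinuousLinearMap.coe_fst', ContinuousLinearMap.coe_snd',
    ContinuousLinearMap.prod_apply, smul_eq_mul,
    LinearMap.coe_toContinuousLinearMap', Matrix.toLin_finTwoProd_apply,
    ContinuousLinearMap.smulRight_apply, ContinuousLinearMap.one_apply,
    ContinuousLinearMap.neg_apply, Function.comp_apply,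
    mul_one, mul_zero, add_zero, zero_add, neg_zero, neg_mul, one_mul, neg_neg,
    Prod.mk_zero_zero, map_zero, fderivPolarCoordSymm, Pi.mul_apply]
  rw [eval_pair (fderiv ℝ u (polarCoord.symm p)) (Real.cos p.2) (Real.sin p.2),
    eval_pair (fderiv ℝ u (polarCoord.symm p)) (-Real.cos p.2) (-Real.sin p.2),
    eval_pair (fderiv ℝ u (polarCoord.symm p)) (-Real.sin p.2) (Real.cos p.2),
    eval_pair (fderiv ℝ u (polarCoord.symm p)) (-(p.1 * Real.sin p.2)) (p.1 * Real.cos p.2),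
    eval2_pair (fderiv ℝ (fderiv ℝ u) (polarCoord.symm p)) (Real.cos p.2) (Real.sin p.2)
      (Real.cos p.2) (Real.sin p.2),
    eval2_pair (fderiv ℝ (fderiv ℝ u) (polarCoord.symm p)) (-(p.1 * Real.sin p.2))
      (p.1 * Real.cos p.2) (-Real.sin p.2) (Real.cos p.2)]
  linear_combination (p.1 * (fderiv ℝ u (polarCoord.symm p) (1,0) ^ 2
      + fderiv ℝ u (polarCoord.symm p) (0,1) ^ 2)
      + p.1 * u (polarCoord.symm p) * (fderiv ℝ (fderiv ℝ u) (polarCoord.symm p) (1,0) (1,0)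
      + fderiv ℝ (fderiv ℝ u) (polarCoord.symm p) (0,1) (0,1))) * Real.sin_sq_add_cos_sq p.2

def annSet (ε R : ℝ) : Set (ℝ × ℝ) :=
  {x | ε ≤ Real.sqrt (x.1 ^ 2 + x.2 ^ 2) ∧ Real.sqrt (x.1 ^ 2 + x.2 ^ 2) ≤ R}

lemma annSet_closed (ε R : ℝ) : IsClosed (annSet ε R) := by
  have hc : Continuous (fun x : ℝ × ℝ => Real.sqrt (x.1 ^ 2 + x.2 ^ 2)) := by fun_prop
  exact (isClosed_le continuous_const hc).inter (isClosed_le hc continuous_const)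

lemma polar_change {α : ℝ} (hα0 : 0 < α) (hα1 : α ≤ Real.pi) (u : ℝ × ℝ → ℝ)
    {ε R : ℝ} (hε : 0 < ε) :
    ∫ x in sector α ∩ annSet ε R, gradSq u x
      = ∫ p in Icc ((ε, 0) : ℝ × ℝ) (R, α), p.1 * gradSq u (polarCoord.symm p) := by
  have hmeas : MeasurableSet (sector α ∩ annSet ε R) :=
    (sector_isOpen hα1).measurableSet.inter (annSet_closed ε R).measurableSet
  have hsub : (Icc ε R ×ˢ Ioo 0 α : Set (ℝ × ℝ)) ⊆ polarCoord.target := by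
    rintro ⟨r, θ⟩ ⟨hr, hθ⟩
    refine ⟨lt_of_lt_of_le hε hr.1, ?_, lt_of_lt_of_le hθ.2 hα1⟩
    have := Real.pi_pos
    dsimp at hθ ⊢
    linarith [hθ.1]
  calc ∫ x in sector α ∩ annSet ε R, gradSq u x
      = ∫ p, (sector α ∩ annSet ε R).indicator (gradSq u) p := (integral_indicator hmeas).symm
    _ = ∫ p in polarCoord.target,
          p.1 • (sector α ∩ annSet ε R).indicator (gradSq u) (polarCoord.symm p) :=
        (integral_comp_polarCoord_symm _).symm
    _ = ∫ p in polarCoord.target,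
          (Icc ε R ×ˢ Ioo 0 α).indicator (fun p => p.1 * gradSq u (polarCoord.symm p)) p := by
        apply setIntegral_congr_fun polarCoord.open_target.measurableSet
        intro p hp
        have hiff : polarCoord.symm p ∈ sector α ∩ annSet ε R ↔ p ∈ Icc ε R ×ˢ Ioo 0 α := by
          rw [Set.mem_inter_iff, mem_sector_iff hα1 hp]
          have hann : polarCoord.symm p ∈ annSet ε R ↔ (ε ≤ p.1 ∧ p.1 ≤ R) := by
            have hn : Real.sqrt ((polarCoord.symm p).1 ^ 2 + (polarCoord.symm p).2 ^ 2) = p.1 :=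
              norm_polar hp.1 p.2
            constructor
            · rintro ⟨h1, h2⟩; rw [hn] at h1 h2; exact ⟨h1, h2⟩
            · rintro ⟨h1, h2⟩; constructor <;> rw [hn] <;> assumption
          rw [hann]
          constructor
          · rintro ⟨h1, h2⟩; exact ⟨h2, h1⟩
          · rintro ⟨h1, h2⟩; exact ⟨h2, h1⟩
        by_cases h : polarCoord.symm p ∈ sector α ∩ annSet ε R
        · simp only [Set.indicator_of_mem h, Set.indicator_of_mem (hiff.mp h), smul_eq_mul]
        · simp only [Set.indicator_of_notMem h,
            Set.indicator_of_notMem (fun hc => h (hiff.mpr hc)), smul_eq_mul, mul_zero]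
    _ = ∫ p in polarCoord.target ∩ Icc ε R ×ˢ Ioo 0 α,
          p.1 * gradSq u (polarCoord.symm p) :=
        setIntegral_indicator (measurableSet_Icc.prod measurableSet_Ioo)
    _ = ∫ p in Icc ε R ×ˢ Ioo 0 α, p.1 * gradSq u (polarCoord.symm p) := by
        rw [Set.inter_eq_self_of_subset_right hsub]
    _ = ∫ p in Icc ((ε, 0) : ℝ × ℝ) (R, α), p.1 * gradSq u (polarCoord.symm p) := by
        apply setIntegral_congr_set
        rw [Icc_prod_eq]
        dsimp only
        rw [Filter.eventuallyEq_set]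
        have h2 : volume (Icc ε R ×ˢ (Icc 0 α \ Ioo 0 α)) = 0 := by
          rw [Measure.volume_eq_prod, Measure.prod_prod]
          have : Icc 0 α \ Ioo 0 α ⊆ {0, α} := by
            rintro x ⟨⟨hx1, hx2⟩, hx3⟩
            rcases eq_or_lt_of_le hx1 with h | h
            · exact Or.inl h.symm
            rcases eq_or_lt_of_le hx2 with h' | h'
            · exact Or.inr h'
            exact absurd ⟨h, h'⟩ hx3
          rw [measure_mono_null this
            ((Set.countable_insert.mpr (Set.countable_singleton α)).measure_zero volume), mul_zero]
        have h3 : ∀ᵐ x ∂volume, x ∉ Icc ε R ×ˢ (Icc 0 α \ Ioo 0 α) :=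
          measure_eq_zero_iff_ae_notMem.mp h2
        filter_upwards [h3] with x hx
        constructor
        · rintro ⟨h1, h2⟩; exact ⟨h1, h2.1.le, h2.2.le⟩
        · rintro ⟨h1, h2⟩
          refine ⟨h1, ?_⟩
          by_contra hcon
          exact hx ⟨h1, h2, hcon⟩

lemma green_rect_s10 {α : ℝ} (hα0 : 0 < α) (hα1 : α ≤ Real.pi) (u : ℝ × ℝ → ℝ)
    (U : Set (ℝ × ℝ)) (hUopen : IsOpen U) (hUsub : closure (sector α) \ {(0 : ℝ × ℝ)} ⊆ U)
    (hUc1 : ContDiffOn ℝ 1 u U)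
    (hu_harm : HarmonicOnSector α u) (hu_neu : NeumannOnGamma2 α u)
    {ε R : ℝ} (hε : 0 < ε) (hεR : ε ≤ R) :
    ∫ x in sector α ∩ annSet ε R, gradSq u x
      = -(∫ t in ε..R, u (t, 0) * pd2 u (t, 0))
        + ((∫ θ in (0:ℝ)..α, F1 u (R, θ)) - ∫ θ in (0:ℝ)..α, F1 u (ε, θ)) := by
  have hcu : ContinuousOn u U := hUc1.continuousOn
  have hcv : ContinuousOn (fderiv ℝ u) U := hUc1.continuousOn_fderiv_of_isOpen hUopen le_rfl
  set a : ℝ × ℝ := (ε, 0) with ha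
  set b : ℝ × ℝ := (R, α) with hb
  have hab : a ≤ b := ⟨hεR, hα0.le⟩
  -- points of the rectangle map into U
  have hmaps : ∀ p ∈ Icc a b, polarCoord.symm p ∈ U := by
    rintro ⟨r, θ⟩ ⟨⟨h1, h2⟩, ⟨h3, h4⟩⟩
    have hr : 0 < r := lt_of_lt_of_le hε h1
    exact hUsub ⟨mem_closure_sector hα0 hr h2 h4,
      by simpa using polar_ne_zero hr θ⟩
  -- interior of the rectangle maps into the sector
  have hmapsi : ∀ p ∈ Ioo a.1 b.1 ×ˢ Ioo a.2 b.2, polarCoord.symm p ∈ sector α := by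
    rintro ⟨r, θ⟩ ⟨⟨h1, h2⟩, ⟨h3, h4⟩⟩
    exact ⟨r, θ, lt_trans hε h1, h3, h4, rfl⟩
  -- continuity building blocks on the rectangle
  have hPc : ContinuousOn (polarCoord.symm : ℝ × ℝ → ℝ × ℝ) (Icc a b) :=
    continuous_polar_symm.continuousOn
  have hucomp : ContinuousOn (fun p => u (polarCoord.symm p)) (Icc a b) :=
    hcu.comp hPc hmaps
  have hvcomp : ContinuousOn (fun p => fderiv ℝ u (polarCoord.symm p)) (Icc a b) :=
    hcv.comp hPc hmaps
  have hercont : ContinuousOn (fun p : ℝ × ℝ => ((Real.cos p.2, Real.sin p.2) : ℝ × ℝ))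
      (Icc a b) := by fun_prop
  have hetcont : ContinuousOn (fun p : ℝ × ℝ => ((-Real.sin p.2, Real.cos p.2) : ℝ × ℝ))
      (Icc a b) := by fun_prop
  have hF1c : ContinuousOn (F1 u) (Icc a b) :=
    (continuousOn_fst.mul (hucomp.mul (hvcomp.clm_apply hercont)))
  have hF2c : ContinuousOn (F2 u) (Icc a b) :=
    hucomp.mul (hvcomp.clm_apply hetcont)
  -- the divergence integrand
  set DF : ℝ × ℝ → ℝ := fun p => p.1 * gradSq u (polarCoord.symm p) with hDF
  have hDFc : ContinuousOn DF (Icc a b) := by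
    apply continuousOn_fst.mul
    apply ContinuousOn.add
    · exact ((hvcomp.clm_apply continuousOn_const).pow 2)
    · exact ((hvcomp.clm_apply continuousOn_const).pow 2)
  have hDFi : IntegrableOn DF (Icc a b) := hDFc.integrableOn_compact isCompact_Icc
  -- null boundary
  have hIccprod : Icc a b = Icc ε R ×ˢ Icc 0 α := Icc_prod_eq a b
  have hIccRdiff : Icc ε R \ Ioo ε R ⊆ {ε, R} := by
    rintro x ⟨⟨hx1, hx2⟩, hx3⟩
    rcases eq_or_lt_of_le hx1 with h | h
    · exact Or.inl h.symm
    rcases eq_or_lt_of_le hx2 with h' | h'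
    · exact Or.inr h'
    exact absurd ⟨h, h'⟩ hx3
  have hIccadiff : Icc 0 α \ Ioo 0 α ⊆ {0, α} := by
    rintro x ⟨⟨hx1, hx2⟩, hx3⟩
    rcases eq_or_lt_of_le hx1 with h | h
    · exact Or.inl h.symm
    rcases eq_or_lt_of_le hx2 with h' | h'
    · exact Or.inr h'
    exact absurd ⟨h, h'⟩ hx3
  have hnull : volume (Icc a b \ Ioo a.1 b.1 ×ˢ Ioo a.2 b.2) = 0 := by
    have h1 : Icc a b \ Ioo a.1 b.1 ×ˢ Ioo a.2 b.2 ⊆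
        ((Icc ε R \ Ioo ε R) ×ˢ Icc 0 α) ∪ (Icc ε R ×ˢ (Icc 0 α \ Ioo 0 α)) := by
      rintro ⟨x, y⟩ ⟨hmem, hnot⟩
      rw [hIccprod] at hmem
      obtain ⟨hx, hy⟩ := hmem
      by_cases h : x ∈ Ioo ε R
      · exact Or.inr ⟨hx, hy, fun hy' => hnot ⟨h, hy'⟩⟩
      · exact Or.inl ⟨⟨hx, h⟩, hy⟩
    refine measure_mono_null h1 (measure_union_null ?_ ?_)
    · rw [Measure.volume_eq_prod, Measure.prod_prod]
      have h2 : volume (Icc ε R \ Ioo ε R) = 0 :=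
        measure_mono_null hIccRdiff ((Set.countable_insert.mpr (Set.countable_singleton R)).measure_zero volume)
      rw [h2, zero_mul]
    · rw [Measure.volume_eq_prod, Measure.prod_prod]
      have h2 : volume (Icc 0 α \ Ioo 0 α) = 0 :=
        measure_mono_null hIccadiff ((Set.countable_insert.mpr (Set.countable_singleton α)).measure_zero volume)
      rw [h2, mul_zero]
  -- a.e. equality of the divergence with DF on the rectangle
  have hae : (fun p => fderiv ℝ (F1 u) p (1, 0) + fderiv ℝ (F2 u) p (0, 1))
      =ᵐ[volume.restrict (Icc a b)] DF := by
    have h1 : ∀ᵐ p ∂volume, p ∉ Icc a b \ Ioo a.1 b.1 ×ˢ Ioo a.2 b.2 :=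
      measure_eq_zero_iff_ae_notMem.mp hnull
    filter_upwards [ae_restrict_of_ae h1, ae_restrict_mem measurableSet_Icc] with p hp1 hp2
    have hpI : p ∈ Ioo a.1 b.1 ×ˢ Ioo a.2 b.2 := by
      by_contra h
      exact hp1 ⟨hp2, h⟩
    have hx := hu_harm _ (hmapsi p hpI)
    obtain ⟨D1, D2, hD1, hD2, hD3⟩ := key_deriv u p hx.1 hx.2.1
    rw [hD1.fderiv, hD2.fderiv, hD3, hx.2.2]
    simp [hDF, gradSq, pd1, pd2]
  -- derivative facts on the interior
  have hkey : ∀ p ∈ Ioo a.1 b.1 ×ˢ Ioo a.2 b.2 \ (∅ : Set (ℝ × ℝ)),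
      HasFDerivAt (F1 u) (fderiv ℝ (F1 u) p) p ∧ HasFDerivAt (F2 u) (fderiv ℝ (F2 u) p) p := by
    rintro p ⟨hp, -⟩
    have hx := hu_harm _ (hmapsi p hp)
    obtain ⟨D1, D2, h1, h2, h3⟩ := key_deriv u p hx.1 hx.2.1
    exact ⟨h1.differentiableAt.hasFDerivAt, h2.differentiableAt.hasFDerivAt⟩
  have hdiv := integral_divergence_prod_Icc_of_hasFDerivAt_off_countable_of_le
    (F1 u) (F2 u) (fun p => fderiv ℝ (F1 u) p) (fun p => fderiv ℝ (F2 u) p) a b hab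
    ∅ countable_empty hF1c hF2c (fun p hp => (hkey p hp).1) (fun p hp => (hkey p hp).2)
    (hDFi.congr_fun_ae hae.symm)
  have hLHS : ∫ x in Icc a b, (fderiv ℝ (F1 u) x (1, 0) + fderiv ℝ (F2 u) x (0, 1))
      = ∫ x in sector α ∩ annSet ε R, gradSq u x := by
    rw [integral_congr_ae hae, ← hDF, polar_change hα0 hα1 u hε]
  have hb2 : b.2 = α := rfl
  have ha2 : a.2 = (0 : ℝ) := rfl
  have htop : ∫ x in a.1..b.1, F2 u (x, b.2) = 0 := by
    rw [show (∫ x in a.1..b.1, F2 u (x, b.2)) = ∫ x in a.1..b.1, (0 : ℝ) from ?_,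
      intervalIntegral.integral_zero]
    apply intervalIntegral.integral_congr
    intro x hx
    rw [Set.uIcc_of_le hεR] at hx
    have hx0 : 0 < x := lt_of_lt_of_le hε hx.1
    show F2 u (x, α) = 0
    have : F2 u (x, α) = u (polarCoord.symm (x, α)) *
        (-Real.sin α * pd1 u (x * Real.cos α, x * Real.sin α)
          + Real.cos α * pd2 u (x * Real.cos α, x * Real.sin α)) := by
      rw [F2, eval_pair]
      rfl
    rw [this, hu_neu x hx0, mul_zero]
  have hbot : ∫ x in a.1..b.1, F2 u (x, a.2) = ∫ t in ε..R, u (t, 0) * pd2 u (t, 0) := by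
    apply intervalIntegral.integral_congr
    intro x hx
    show F2 u (x, 0) = u (x, 0) * pd2 u (x, 0)
    have hps : polarCoord.symm ((x : ℝ), (0 : ℝ)) = ((x : ℝ), (0 : ℝ)) := by
      show ((x * Real.cos 0, x * Real.sin 0) : ℝ × ℝ) = (x, 0)
      simp
    rw [F2, eval_pair, hps]
    simp [pd2]
  rw [hLHS, htop, hbot] at hdiv
  rw [hdiv]
  ring

lemma F1_abs_le (u : ℝ × ℝ → ℝ) {ρ : ℝ} (θ : ℝ) (hρ : 0 < ρ) :
    |F1 u (ρ, θ)| ≤ ρ * (|u (polarCoord.symm (ρ, θ))| * gradNorm u (polarCoord.symm (ρ, θ))) := by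
  set X := polarCoord.symm (ρ, θ)
  have hA : |fderiv ℝ u X (Real.cos θ, Real.sin θ)| ≤ gradNorm u X := by
    rw [eval_pair]
    have h1 : (Real.cos θ * fderiv ℝ u X (1,0) + Real.sin θ * fderiv ℝ u X (0,1)) ^ 2
        ≤ pd1 u X ^ 2 + pd2 u X ^ 2 := by
      have h2 := Real.sin_sq_add_cos_sq θ
      have h3 := sq_nonneg (Real.sin θ * fderiv ℝ u X (1,0) - Real.cos θ * fderiv ℝ u X (0,1))
      show _ ≤ fderiv ℝ u X (1,0) ^ 2 + fderiv ℝ u X (0,1) ^ 2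
      nlinarith
    calc |Real.cos θ * fderiv ℝ u X (1,0) + Real.sin θ * fderiv ℝ u X (0,1)|
        = Real.sqrt ((Real.cos θ * fderiv ℝ u X (1,0) + Real.sin θ * fderiv ℝ u X (0,1)) ^ 2) :=
          (Real.sqrt_sq_eq_abs _).symm
      _ ≤ gradNorm u X := Real.sqrt_le_sqrt h1
  have : |F1 u (ρ, θ)| = ρ * (|u X| * |fderiv ℝ u X (Real.cos θ, Real.sin θ)|) := by
    rw [F1, abs_mul, abs_mul, abs_of_pos hρ]
  rw [this]
  have h0 : 0 ≤ |u X| := abs_nonneg _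
  gcongr

/-- Positivity of the Dirichlet-to-Neumann map: for harmonic `u` with
zero Neumann data on `Γ₂`, suitable decay and integrability,
`−∫₀^∞ u(x₁,0) ∂u/∂x₂(x₁,0) dx₁ = ∫_G |∇u|² ≥ 0`, with strict positivity unless
`∇u` vanishes identically on `G`. -/
theorem stmt_10 (α : ℝ) (hα₀ : 0 < α) (hα₁ : α ≤ Real.pi)
    (u : ℝ × ℝ → ℝ)
    (hu_smooth : ∃ U : Set (ℝ × ℝ), IsOpen U ∧
      closure (sector α) \ {(0 : ℝ × ℝ)} ⊆ U ∧ ContDiffOn ℝ 1 u U)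
    (hu_harm : HarmonicOnSector α u)
    (hu_neu : NeumannOnGamma2 α u)
    (hdecay : ∃ C : ℝ, 0 < C ∧ ∃ δ : ℝ, 0 < δ ∧
      ∀ x ∈ closure (sector α) \ {(0 : ℝ × ℝ)},
        (Real.sqrt (x.1 ^ 2 + x.2 ^ 2) ≤ 1 →
          |u x| * gradNorm u x ≤ C * Real.sqrt (x.1 ^ 2 + x.2 ^ 2) ^ (δ - 1)) ∧
        (1 ≤ Real.sqrt (x.1 ^ 2 + x.2 ^ 2) →
          |u x| * gradNorm u x ≤ C * Real.sqrt (x.1 ^ 2 + x.2 ^ 2) ^ (-δ - 1)))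
    (hint : IntegrableOn (gradSq u) (sector α) volume)
    (hint1 : IntegrableOn (fun x₁ : ℝ => u (x₁, 0) * pd2 u (x₁, 0)) (Set.Ioi 0) volume) :
    (-∫ x₁ in Set.Ioi (0 : ℝ), u (x₁, 0) * pd2 u (x₁, 0)) = ∫ x in sector α, gradSq u x ∧
    0 ≤ ∫ x in sector α, gradSq u x ∧
    (¬ (∀ x ∈ sector α, pd1 u x = 0 ∧ pd2 u x = 0) →
      0 < ∫ x in sector α, gradSq u x) := by
  obtain ⟨U, hUopen, hUsub, hUc1⟩ := hu_smooth
  obtain ⟨C, hC, δ, hδ, hdec⟩ := hdecay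
  have hgradnonneg : ∀ x, 0 ≤ gradSq u x := fun x => add_nonneg (sq_nonneg _) (sq_nonneg _)
  -- sequences
  set en : ℕ → ℝ := fun n => ((n : ℝ) + 1)⁻¹ with hen
  set Rn : ℕ → ℝ := fun n => (n : ℝ) + 1 with hRn
  have hnpos : ∀ n : ℕ, (0:ℝ) < (n:ℝ) + 1 := fun n => by positivity
  have hRpos : ∀ n, 0 < Rn n := hnpos
  have henpos : ∀ n, 0 < en n := fun n => inv_pos.2 (hnpos n)
  have hRn1 : ∀ n, 1 ≤ Rn n := fun n => le_add_of_nonneg_left (Nat.cast_nonneg n)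
  have hen1 : ∀ n, en n ≤ 1 := fun n => by
    rw [hen]
    exact inv_le_one_of_one_le₀ (hRn1 n)
  have henR : ∀ n, en n ≤ Rn n := fun n => le_trans (hen1 n) (hRn1 n)
  -- the per-n Green identity
  have hkey : ∀ n, ∫ x in sector α ∩ annSet (en n) (Rn n), gradSq u x
      = -(∫ t in Set.Ioc (en n) (Rn n), u (t, 0) * pd2 u (t, 0))
        + ((∫ θ in (0:ℝ)..α, F1 u (Rn n, θ)) - ∫ θ in (0:ℝ)..α, F1 u (en n, θ)) := by
    intro n
    rw [← intervalIntegral.integral_of_le (henR n)]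
    exact green_rect_s10 hα₀ hα₁ u U hUopen hUsub hUc1 hu_harm hu_neu (henpos n) (henR n)
  have hnat : Tendsto (fun n : ℕ => (n : ℝ) + 1) atTop atTop :=
    tendsto_atTop_add_const_right _ 1 tendsto_natCast_atTop_atTop
  -- outer arc tends to zero
  have harcR : Tendsto (fun n => ∫ θ in (0:ℝ)..α, F1 u (Rn n, θ)) atTop (𝓝 0) := by
    apply squeeze_zero_norm (a := fun n => C * (Rn n) ^ (-δ) * |α - 0|)
    · intro n
      apply intervalIntegral.norm_integral_le_of_norm_le_const
      intro θ hθ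
      have hθ' : θ ∈ Set.Ioc 0 α := by rwa [Set.uIoc_of_le hα₀.le] at hθ
      have hXcl : polarCoord.symm (Rn n, θ) ∈ closure (sector α) \ {(0:ℝ×ℝ)} :=
        ⟨mem_closure_sector hα₀ (hRpos n) hθ'.1.le hθ'.2,
          by simpa using polar_ne_zero (hRpos n) θ⟩
      have hsq : Real.sqrt ((polarCoord.symm ((Rn n : ℝ), θ)).1 ^ 2
          + (polarCoord.symm ((Rn n : ℝ), θ)).2 ^ 2) = Rn n := norm_polar (hRpos n) θ
      have hdec2 := (hdec _ hXcl).2 (by rw [hsq]; exact hRn1 n)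
      rw [hsq] at hdec2
      calc ‖F1 u (Rn n, θ)‖
          ≤ Rn n * (|u (polarCoord.symm (Rn n, θ))| * gradNorm u (polarCoord.symm (Rn n, θ))) :=
            F1_abs_le u θ (hRpos n)
        _ ≤ Rn n * (C * (Rn n) ^ (-δ - 1)) :=
            mul_le_mul_of_nonneg_left hdec2 (hRpos n).le
        _ = C * (Rn n) ^ (-δ) := by
            rw [show -δ = (-δ - 1) + 1 by ring, Real.rpow_add (hRpos n), Real.rpow_one]; ring
    · have h1 : Tendsto (fun n : ℕ => (Rn n) ^ (-δ)) atTop (𝓝 0) :=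
        (tendsto_rpow_neg_atTop hδ).comp hnat
      simpa using (h1.const_mul C).mul_const |α - 0|
  -- inner arc tends to zero
  have harce : Tendsto (fun n => ∫ θ in (0:ℝ)..α, F1 u (en n, θ)) atTop (𝓝 0) := by
    apply squeeze_zero_norm (a := fun n => C * (en n) ^ δ * |α - 0|)
    · intro n
      apply intervalIntegral.norm_integral_le_of_norm_le_const
      intro θ hθ
      have hθ' : θ ∈ Set.Ioc 0 α := by rwa [Set.uIoc_of_le hα₀.le] at hθ
      have hXcl : polarCoord.symm (en n, θ) ∈ closure (sector α) \ {(0:ℝ×ℝ)} :=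
        ⟨mem_closure_sector hα₀ (henpos n) hθ'.1.le hθ'.2,
          by simpa using polar_ne_zero (henpos n) θ⟩
      have hsq : Real.sqrt ((polarCoord.symm ((en n : ℝ), θ)).1 ^ 2
          + (polarCoord.symm ((en n : ℝ), θ)).2 ^ 2) = en n := norm_polar (henpos n) θ
      have hdec2 := (hdec _ hXcl).1 (by rw [hsq]; exact hen1 n)
      rw [hsq] at hdec2
      calc ‖F1 u (en n, θ)‖
          ≤ en n * (|u (polarCoord.symm (en n, θ))| * gradNorm u (polarCoord.symm (en n, θ))) :=
            F1_abs_le u θ (henpos n)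
        _ ≤ en n * (C * (en n) ^ (δ - 1)) :=
            mul_le_mul_of_nonneg_left hdec2 (henpos n).le
        _ = C * (en n) ^ δ := by
            rw [show δ = (δ - 1) + 1 by ring, Real.rpow_add (henpos n), Real.rpow_one]; ring
    · have h1 : Tendsto (fun n : ℕ => (en n) ^ δ) atTop (𝓝 0) := by
        have h2 : Tendsto (fun n : ℕ => ((n : ℝ) + 1) ^ δ) atTop atTop :=
          (tendsto_rpow_atTop hδ).comp hnat
        have h3 := h2.inv_tendsto_atTop
        refine h3.congr fun n => ?_
        rw [hen]
        exact (Real.inv_rpow (hnpos n).le δ).symm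
      simpa using (h1.const_mul C).mul_const |α - 0|
  -- the boundary line integral converges
  have hline : Tendsto (fun n => ∫ t in Set.Ioc (en n) (Rn n), u (t, 0) * pd2 u (t, 0))
      atTop (𝓝 (∫ t in Set.Ioi (0:ℝ), u (t, 0) * pd2 u (t, 0))) := by
    have hUion : ⋃ n, Set.Ioc (en n) (Rn n) = Set.Ioi (0:ℝ) := by
      ext t
      simp only [Set.mem_iUnion, Set.mem_Ioc, Set.mem_Ioi]
      constructor
      · rintro ⟨n, h1, h2⟩; exact lt_trans (henpos n) h1
      · intro ht
        obtain ⟨n, hn⟩ := exists_nat_gt (max t t⁻¹)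
        have h1 : t < (n:ℝ) + 1 := by
          have := le_max_left t t⁻¹; linarith [lt_of_le_of_lt this hn]
        have h2 : t⁻¹ < (n:ℝ) + 1 := by
          have := le_max_right t t⁻¹; linarith [lt_of_le_of_lt this hn]
        refine ⟨n, ?_, h1.le⟩
        rw [hen]
        have h4 := mul_inv_cancel₀ ht.ne'
        have h5 := mul_inv_cancel₀ (hnpos n).ne'
        nlinarith [mul_pos (inv_pos.2 (hnpos n)) ht, inv_pos.2 (hnpos n)]
    have hmono : Monotone (fun n => Set.Ioc (en n) (Rn n)) := by
      intro m n hmn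
      apply Set.Ioc_subset_Ioc
      · rw [hen]
        have hc : ((m:ℝ) + 1) ≤ (n:ℝ) + 1 := by
          have := (Nat.cast_le (α := ℝ)).2 hmn; linarith
        exact inv_anti₀ (hnpos m) hc
      · rw [hRn]
        have := (Nat.cast_le (α := ℝ)).2 hmn; dsimp; linarith
    have := tendsto_setIntegral_of_monotone (fun n => measurableSet_Ioc) hmono
      (by rw [hUion]; exact hint1)
    rwa [hUion] at this
  -- area integrals converge
  have hsm : ∀ n, MeasurableSet (sector α ∩ annSet (en n) (Rn n)) := fun n =>
    (sector_isOpen hα₁).measurableSet.inter (annSet_closed _ _).measurableSet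
  have hmono2 : Monotone (fun n => sector α ∩ annSet (en n) (Rn n)) := by
    intro m n hmn
    apply Set.inter_subset_inter_right
    rintro x ⟨h1, h2⟩
    have hc : ((m:ℝ) + 1) ≤ (n:ℝ) + 1 := by
      have := (Nat.cast_le (α := ℝ)).2 hmn; linarith
    constructor
    · exact le_trans (by rw [hen]; exact inv_anti₀ (hnpos m) hc) h1
    · refine le_trans h2 ?_
      rw [hRn]; dsimp; linarith
  have hUion2 : ⋃ n, sector α ∩ annSet (en n) (Rn n) = sector α := by
    ext x
    simp only [Set.mem_iUnion, Set.mem_inter_iff]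
    constructor
    · rintro ⟨n, h1, h2⟩; exact h1
    · intro hx
      have h2 := sector_snd_pos hα₁ hx
      have ht : 0 < Real.sqrt (x.1 ^ 2 + x.2 ^ 2) := Real.sqrt_pos.2 (by nlinarith)
      set t := Real.sqrt (x.1 ^ 2 + x.2 ^ 2) with htdef
      obtain ⟨n, hn⟩ := exists_nat_gt (max t t⁻¹)
      have h1 : t < (n:ℝ) + 1 := by
        have := le_max_left t t⁻¹; linarith [lt_of_le_of_lt this hn]
      have h3 : t⁻¹ < (n:ℝ) + 1 := by
        have := le_max_right t t⁻¹; linarith [lt_of_le_of_lt this hn]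
      refine ⟨n, hx, ?_, h1.le⟩
      rw [hen]
      have h4 := mul_inv_cancel₀ ht.ne'
      have h5 := mul_inv_cancel₀ (hnpos n).ne'
      have h6 : ((n:ℝ)+1)⁻¹ < t := by
        nlinarith [mul_pos (inv_pos.2 (hnpos n)) ht, inv_pos.2 (hnpos n)]
      exact h6.le
  have harea : Tendsto (fun n => ∫ x in sector α ∩ annSet (en n) (Rn n), gradSq u x) atTop
      (𝓝 (∫ x in sector α, gradSq u x)) := by
    have := tendsto_setIntegral_of_monotone hsm hmono2 (by rw [hUion2]; exact hint)
    rwa [hUion2] at this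
  have hcomb : Tendsto (fun n => ∫ x in sector α ∩ annSet (en n) (Rn n), gradSq u x) atTop
      (𝓝 (-(∫ t in Set.Ioi (0:ℝ), u (t, 0) * pd2 u (t, 0)) + (0 - 0))) :=
    Tendsto.congr (fun n => (hkey n).symm) ((hline.neg).add (harcR.sub harce))
  have hJeq := tendsto_nhds_unique harea hcomb
  refine ⟨?_, ?_, ?_⟩
  · rw [hJeq]; ring
  · exact setIntegral_nonneg (sector_isOpen hα₁).measurableSet fun x _ => hgradnonneg x
  · intro hnz
    push_neg at hnz
    obtain ⟨x, hx, hne⟩ := hnz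
    have hc : 0 < gradSq u x := by
      have hsum : gradSq u x = pd1 u x ^ 2 + pd2 u x ^ 2 := rfl
      by_cases h : pd1 u x = 0
      · have h2 : 0 < pd2 u x ^ 2 := by
          rw [← sq_abs]; exact pow_pos (abs_pos.2 (hne h)) 2
        rw [hsum]; nlinarith [sq_nonneg (pd1 u x)]
      · have h2 : 0 < pd1 u x ^ 2 := by
          rw [← sq_abs]; exact pow_pos (abs_pos.2 h) 2
        rw [hsum]; nlinarith [sq_nonneg (pd2 u x)]
    have hxU : x ∈ U := hUsub (sector_subset_cl hα₁ hx)
    have hcv : ContinuousOn (fderiv ℝ u) U := hUc1.continuousOn_fderiv_of_isOpen hUopen le_rfl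
    have hgc : ContinuousOn (gradSq u) U := by
      have h1 : ContinuousOn (fun y => fderiv ℝ u y ((1:ℝ), (0:ℝ))) U :=
        hcv.clm_apply continuousOn_const
      have h2 : ContinuousOn (fun y => fderiv ℝ u y ((0:ℝ), (1:ℝ))) U :=
        hcv.clm_apply continuousOn_const
      exact (h1.pow 2).add (h2.pow 2)
    have hca : ContinuousAt (gradSq u) x := hgc.continuousAt (hUopen.mem_nhds hxU)
    have hev : ∀ᶠ y in 𝓝 x, gradSq u x / 2 < gradSq u y :=
      hca.eventually (eventually_gt_nhds (half_lt_self hc))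
    obtain ⟨ρ, hρpos, hball⟩ := Metric.mem_nhds_iff.mp
      (Filter.inter_mem ((sector_isOpen hα₁).mem_nhds hx) hev)
    have hsub2 : Metric.ball x ρ ⊆ sector α := fun y hy => (hball hy).1
    have hlow : ∀ y ∈ Metric.ball x ρ, gradSq u x / 2 ≤ gradSq u y := fun y hy => (hball hy).2.le
    have hballint : IntegrableOn (gradSq u) (Metric.ball x ρ) := hint.mono_set hsub2
    have h1 := setIntegral_ge_of_const_le (μ := volume) measurableSet_ball
      measure_ball_lt_top.ne hlow hballint
    have h2 : ∫ y in Metric.ball x ρ, gradSq u y ≤ ∫ y in sector α, gradSq u y :=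
      setIntegral_mono_set hint (Filter.Eventually.of_forall hgradnonneg)
        (HasSubset.Subset.eventuallyLE hsub2)
    have h3 : 0 < (volume (Metric.ball x ρ)).toReal :=
      ENNReal.toReal_pos (Metric.measure_ball_pos volume x hρpos).ne' measure_ball_lt_top.ne
    calc (0:ℝ) < gradSq u x / 2 * (volume (Metric.ball x ρ)).toReal := by positivity
      _ ≤ ∫ y in Metric.ball x ρ, gradSq u y := by rw [smul_eq_mul, mul_comm] at h1; exact h1
      _ ≤ ∫ x in sector α, gradSq u x := h2
end

section
/- Let E be a Banach space, A : E → E a continuous linear operator, and u : ℝ × ℝ → E a function such that u, ∂₁u and ∂₁²u (first and second partial derivatives in the first variable) exist and are jointly continuous, and such that for all t, s ∈ ℝ: ∂₁²u(t, s) + A(u(t, s)) = 0 and u(0, s) = 0. Set F(s) = ∂₁u(0, s). Then the function v(t) := ∫₀ᵗ u(t − s, s) ds is twice differentiable on ℝ and satisfies v″(t) + A(v(t)) = F(t) for all t ∈ ℝ, together with v(0) = 0 and v′(0) = 0. -/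
open MeasureTheory intervalIntegral Set

/-- Auxiliary: derivative of `t ↦ ∫ s in 0..t, g (t, s)` when `g` has continuous
first partial derivative `g₁`. -/
lemma duhamel_key {E : Type*} [NormedAddCommGroup E] [NormedSpace ℝ E] [CompleteSpace E]
    (g g₁ : ℝ × ℝ → E) (hg : Continuous g) (hg₁ : Continuous g₁)
    (hd : ∀ t s : ℝ, HasDerivAt (fun t' : ℝ => g (t', s)) (g₁ (t, s)) t) (t : ℝ) :
    HasDerivAt (fun t' : ℝ => ∫ s in (0:ℝ)..t', g (t', s))
      (g (t, t) + ∫ s in (0:ℝ)..t, g₁ (t, s)) t := by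
  have hgc : ∀ c : ℝ, Continuous fun s : ℝ => g (c, s) :=
    fun c => hg.comp (continuous_const.prodMk continuous_id)
  have hg₁c : ∀ c : ℝ, Continuous fun s : ℝ => g₁ (c, s) :=
    fun c => hg₁.comp (continuous_const.prodMk continuous_id)
  have hg₁r : ∀ s : ℝ, Continuous fun τ : ℝ => g₁ (τ, s) :=
    fun s => hg₁.comp (continuous_id.prodMk continuous_const)
  rw [hasDerivAt_iff_isLittleO, Asymptotics.isLittleO_iff]
  intro ε hε
  set b : ℝ := |t| + 1 with hb
  have hb0 : (0:ℝ) < b := by positivity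
  -- compact set
  set K : Set (ℝ × ℝ) := Icc (t - 1) (t + 1) ×ˢ Icc (-b) b with hK
  have hKc : IsCompact K := (isCompact_Icc).prod isCompact_Icc
  -- bound for g₁ on K
  obtain ⟨M, hM⟩ := hKc.exists_bound_of_continuousOn hg₁.continuousOn
  have htK0 : ((t : ℝ), t) ∈ K := by
    simp only [hK, Set.mem_prod, Set.mem_Icc, hb]
    and_intros <;> linarith [neg_abs_le t, le_abs_self t]
  have hM0 : 0 ≤ M := le_trans (norm_nonneg _) (hM (t, t) htK0)
  -- uniform continuity of g₁ on K
  set ε₁ : ℝ := ε / (3 * (b + 1)) with hε₁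
  have hε₁0 : 0 < ε₁ := by positivity
  obtain ⟨δ₁, hδ₁0, hδ₁⟩ := Metric.uniformContinuousOn_iff.mp
    (hKc.uniformContinuousOn_of_continuous hg₁.continuousOn) ε₁ hε₁0
  -- continuity of g at (t,t)
  obtain ⟨δ₂, hδ₂0, hδ₂⟩ := Metric.continuousAt_iff.mp hg.continuousAt (ε/3) (by positivity)
  set δ : ℝ := min 1 (min δ₁ (min δ₂ (ε / (3 * (M + 1))))) with hδ
  have hδ0 : 0 < δ := by
    refine lt_min one_pos (lt_min hδ₁0 (lt_min hδ₂0 (by positivity)))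
  filter_upwards [Metric.ball_mem_nhds t hδ0] with t' ht'
  rw [Metric.mem_ball, Real.dist_eq] at ht'
  have hle1 : |t' - t| ≤ 1 := le_of_lt (lt_of_lt_of_le ht' (min_le_left _ _))
  have hleδ₁ : |t' - t| < δ₁ := lt_of_lt_of_le ht' (le_trans (min_le_right _ _) (min_le_left _ _))
  have hleδ₂ : |t' - t| < δ₂ := lt_of_lt_of_le ht'
    (le_trans (min_le_right _ _) (le_trans (min_le_right _ _) (min_le_left _ _)))
  have hleM : |t' - t| ≤ ε / (3 * (M + 1)) := le_of_lt (lt_of_lt_of_le ht'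
    (le_trans (min_le_right _ _) (le_trans (min_le_right _ _) (min_le_right _ _))))
  have ht'b : |t'| ≤ b := by
    have := abs_sub_abs_le_abs_sub t' t
    simp only [hb]; linarith
  have htb : |t| ≤ b := by simp [hb]
  have htK : t ∈ Icc (t - 1) (t + 1) := ⟨by linarith, by linarith⟩
  -- membership helpers
  have hmem : ∀ s ∈ uIoc (0:ℝ) t', s ∈ Icc (-b) b := by
    intro s hs
    rcases le_or_gt 0 t' with h | h
    · rw [uIoc_of_le h] at hs
      exact ⟨by linarith [hs.1.le, hb0.le], le_trans hs.2 (le_trans (le_abs_self t') ht'b)⟩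
    · rw [uIoc_of_ge h.le] at hs
      refine ⟨le_trans ?_ hs.1.le, le_trans hs.2 hb0.le⟩
      have : -|t'| ≤ t' := neg_abs_le t'
      linarith
  have hmem2 : ∀ s ∈ uIoc t t', s ∈ Icc (-b) b := by
    intro s hs
    have h1 : min t t' ≤ s := le_of_lt hs.1
    have h2 : s ≤ max t t' := hs.2
    constructor
    · rcases min_cases t t' with ⟨h, _⟩ | ⟨h, _⟩ <;>
        [ (have := neg_abs_le t; rw [h] at h1; linarith);
          (have := neg_abs_le t'; rw [h] at h1; linarith) ]
    · rcases max_cases t t' with ⟨h, _⟩ | ⟨h, _⟩ <;>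
        [ (have := le_abs_self t; rw [h] at h2; linarith);
          (have := le_abs_self t'; rw [h] at h2; linarith) ]
  -- integrability facts
  have i_a : IntervalIntegrable (fun s => g (t', s)) volume 0 t' := (hgc t').intervalIntegrable _ _
  have i_b : IntervalIntegrable (fun s => g (t, s)) volume 0 t' := (hgc t).intervalIntegrable _ _
  have i_b' : IntervalIntegrable (fun s => g (t, s)) volume 0 t := (hgc t).intervalIntegrable _ _
  have i_c : IntervalIntegrable (fun s => g₁ (t, s)) volume 0 t' := (hg₁c t).intervalIntegrable _ _
  have i_c' : IntervalIntegrable (fun s => g₁ (t, s)) volume 0 t := (hg₁c t).intervalIntegrable _ _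
  -- FTC identity
  have hsub : ∀ s : ℝ, g (t', s) - g (t, s) - (t' - t) • g₁ (t, s)
      = ∫ τ in t..t', (g₁ (τ, s) - g₁ (t, s)) := by
    intro s
    have hftc : (∫ τ in t..t', g₁ (τ, s)) = g (t', s) - g (t, s) :=
      integral_eq_sub_of_hasDerivAt (fun τ _ => hd τ s) ((hg₁r s).intervalIntegrable _ _)
    rw [intervalIntegral.integral_sub ((hg₁r s).intervalIntegrable _ _)
      (intervalIntegrable_const), hftc, intervalIntegral.integral_const]
  -- decomposition
  set T1 : E := ∫ s in (0:ℝ)..t', (g (t', s) - g (t, s) - (t' - t) • g₁ (t, s)) with hT1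
  set T2 : E := (t' - t) • ∫ s in t..t', g₁ (t, s) with hT2
  set T3 : E := ∫ s in t..t', (g (t, s) - g (t, t)) with hT3
  have hdecomp : (∫ s in (0:ℝ)..t', g (t', s)) - (∫ s in (0:ℝ)..t, g (t, s))
      - (t' - t) • (g (t, t) + ∫ s in (0:ℝ)..t, g₁ (t, s)) = T1 + T2 + T3 := by
    have e1 : T1 = (∫ s in (0:ℝ)..t', g (t', s)) - (∫ s in (0:ℝ)..t', g (t, s))
        - (t' - t) • (∫ s in (0:ℝ)..t', g₁ (t, s)) := by
      have i_c2 : IntervalIntegrable (fun s => (t' - t) • g₁ (t, s)) volume 0 t' :=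
        (continuous_const.smul (hg₁c t)).intervalIntegrable _ _
      rw [hT1, intervalIntegral.integral_sub (i_a.sub i_b) i_c2,
        intervalIntegral.integral_sub i_a i_b, intervalIntegral.integral_smul]
    have e2 : T2 = (t' - t) • ((∫ s in (0:ℝ)..t', g₁ (t, s)) - ∫ s in (0:ℝ)..t, g₁ (t, s)) := by
      rw [hT2, integral_interval_sub_left i_c i_c']
    have e3 : T3 = ((∫ s in (0:ℝ)..t', g (t, s)) - ∫ s in (0:ℝ)..t, g (t, s))
        - (t' - t) • g (t, t) := by
      rw [hT3, intervalIntegral.integral_sub ((hgc t).intervalIntegrable t t')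
        intervalIntegrable_const,
        integral_interval_sub_left i_b i_b', intervalIntegral.integral_const]
    rw [e1, e2, e3, smul_add, smul_sub]
    abel
  rw [hdecomp]
  -- bounds
  have bT1 : ‖T1‖ ≤ ε₁ * |t' - t| * b := by
    have h1 : ‖T1‖ ≤ ε₁ * |t' - t| * |t' - 0| := by
      refine intervalIntegral.norm_integral_le_of_norm_le_const ?_
      intro s hs
      rw [hsub s]
      refine le_trans (intervalIntegral.norm_integral_le_of_norm_le_const ?_) le_rfl
      intro τ hτ
      have hτt : |τ - t| ≤ |t' - t| := by
        rcases le_or_gt t t' with h | h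
        · rw [uIoc_of_le h] at hτ
          rw [abs_of_nonneg (by linarith [hτ.1.le]), abs_of_nonneg (by linarith)]
          linarith [hτ.2]
        · rw [uIoc_of_ge h.le] at hτ
          rw [abs_of_nonpos (by linarith [hτ.2]), abs_of_nonpos (by linarith)]
          linarith [hτ.1.le]
      have hτK : (τ, s) ∈ K := by
        constructor
        · constructor
          · have : -(1:ℝ) ≤ τ - t := by
              have := neg_abs_le (τ - t); linarith [le_trans hτt hle1]
            linarith
          · have : τ - t ≤ 1 := le_trans (le_abs_self _) (le_trans hτt hle1)
            linarith
        · exact hmem s hs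
      have htsK : ((t : ℝ), s) ∈ K := ⟨htK, hmem s hs⟩
      have hdist : dist (τ, s) ((t : ℝ), s) < δ₁ := by
        rw [Prod.dist_eq]
        simp only [Real.dist_eq, sub_self, abs_zero]
        rw [max_eq_left (abs_nonneg _)]
        exact lt_of_le_of_lt hτt hleδ₁
      have := hδ₁ (τ, s) hτK ((t : ℝ), s) htsK hdist
      rw [dist_eq_norm] at this
      exact this.le
    refine le_trans h1 ?_
    have : |t' - 0| ≤ b := by simpa using ht'b
    have h2 : 0 ≤ ε₁ * |t' - t| := by positivity
    nlinarith [abs_nonneg (t' - 0)]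
  have bT2 : ‖T2‖ ≤ ε / 3 * |t' - t| := by
    rw [hT2, norm_smul, Real.norm_eq_abs]
    have h1 : ‖∫ s in t..t', g₁ (t, s)‖ ≤ M * |t' - t| := by
      refine intervalIntegral.norm_integral_le_of_norm_le_const ?_
      intro s hs
      exact hM ((t : ℝ), s) ⟨htK, hmem2 s hs⟩
    have h2 : M * |t' - t| ≤ ε / 3 := by
      have h3 : M * |t' - t| ≤ (M + 1) * (ε / (3 * (M + 1))) := by
        have := abs_nonneg (t' - t)
        nlinarith
      have h4 : (M + 1) * (ε / (3 * (M + 1))) = ε / 3 := by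
        field_simp
      linarith
    calc |t' - t| * ‖∫ s in t..t', g₁ (t, s)‖ ≤ |t' - t| * (M * |t' - t|) := by
          exact mul_le_mul_of_nonneg_left h1 (abs_nonneg _)
      _ = (M * |t' - t|) * |t' - t| := by ring
      _ ≤ ε / 3 * |t' - t| := mul_le_mul_of_nonneg_right h2 (abs_nonneg _)
  have bT3 : ‖T3‖ ≤ ε / 3 * |t' - t| := by
    have h1 : ‖T3‖ ≤ ε / 3 * |t' - t| := by
      refine intervalIntegral.norm_integral_le_of_norm_le_const ?_
      intro s hs
      have hst : |s - t| ≤ |t' - t| := by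
        rcases le_or_gt t t' with h | h
        · rw [uIoc_of_le h] at hs
          rw [abs_of_nonneg (by linarith [hs.1.le]), abs_of_nonneg (by linarith)]
          linarith [hs.2]
        · rw [uIoc_of_ge h.le] at hs
          rw [abs_of_nonpos (by linarith [hs.2]), abs_of_nonpos (by linarith)]
          linarith [hs.1.le]
      have : dist ((t : ℝ), s) ((t : ℝ), t) < δ₂ := by
        rw [Prod.dist_eq]
        simp only [Real.dist_eq, sub_self, abs_zero]
        rw [max_eq_right (abs_nonneg _)]
        exact lt_of_le_of_lt hst hleδ₂
      have := hδ₂ this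
      rw [dist_eq_norm] at this
      exact this.le
    exact h1
  have hεb : ε₁ * b ≤ ε / 3 := by
    rw [hε₁]
    rw [div_mul_eq_mul_div, div_le_div_iff₀ (by positivity) (by norm_num)]
    nlinarith
  calc ‖T1 + T2 + T3‖ ≤ ‖T1‖ + ‖T2‖ + ‖T3‖ := norm_add₃_le
    _ ≤ ε₁ * |t' - t| * b + ε / 3 * |t' - t| + ε / 3 * |t' - t| := by
        exact add_le_add (add_le_add bT1 bT2) bT3
    _ = (ε₁ * b) * |t' - t| + ε / 3 * |t' - t| + ε / 3 * |t' - t| := by ring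
    _ ≤ ε / 3 * |t' - t| + ε / 3 * |t' - t| + ε / 3 * |t' - t| := by
        exact add_le_add (add_le_add (mul_le_mul_of_nonneg_right hεb (abs_nonneg _)) le_rfl) le_rfl
    _ = ε * |t' - t| := by ring
    _ = ε * ‖t' - t‖ := by rw [Real.norm_eq_abs]

/-- Duhamel's principle: Let `E` be a Banach space, `A : E → E` a
continuous linear operator, and `u : ℝ × ℝ → E` such that `u`, `∂₁u` and `∂₁²u` exist
and are jointly continuous, with `∂₁²u(t,s) + A(u(t,s)) = 0` and `u(0,s) = 0` for all
`t, s`. With `F(s) = ∂₁u(0,s)`, the function `v(t) = ∫₀ᵗ u(t−s, s) ds` is twice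
differentiable and satisfies `v″ + Av = F`, `v(0) = 0`, `v′(0) = 0`. -/
theorem stmt_13 {E : Type*} [NormedAddCommGroup E] [NormedSpace ℝ E] [CompleteSpace E]
    (A : E →L[ℝ] E)
    (u u₁ u₂ : ℝ × ℝ → E)
    (hu₁ : ∀ t s : ℝ, HasDerivAt (fun t' : ℝ => u (t', s)) (u₁ (t, s)) t)
    (hu₂ : ∀ t s : ℝ, HasDerivAt (fun t' : ℝ => u₁ (t', s)) (u₂ (t, s)) t)
    (hu_cont : Continuous u) (hu₁_cont : Continuous u₁) (hu₂_cont : Continuous u₂)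
    (heq : ∀ t s : ℝ, u₂ (t, s) + A (u (t, s)) = 0)
    (hzero : ∀ s : ℝ, u (0, s) = 0)
    (F : ℝ → E) (hF : ∀ s : ℝ, F s = u₁ (0, s))
    (v : ℝ → E) (hv : ∀ t : ℝ, v t = ∫ s in (0 : ℝ)..t, u (t - s, s)) :
    Differentiable ℝ v ∧ Differentiable ℝ (deriv v) ∧
    (∀ t : ℝ, deriv (deriv v) t + A (v t) = F t) ∧
    v 0 = 0 ∧ deriv v 0 = 0 := by
  -- shifted functions
  set g : ℝ × ℝ → E := fun p => u (p.1 - p.2, p.2) with hg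
  set g₁ : ℝ × ℝ → E := fun p => u₁ (p.1 - p.2, p.2) with hg₁
  set g₂ : ℝ × ℝ → E := fun p => u₂ (p.1 - p.2, p.2) with hg₂
  have hshift : Continuous fun p : ℝ × ℝ => ((p.1 - p.2 : ℝ), p.2) :=
    (continuous_fst.sub continuous_snd).prodMk continuous_snd
  have hgc : Continuous g := hu_cont.comp hshift
  have hg₁c : Continuous g₁ := hu₁_cont.comp hshift
  have hg₂c : Continuous g₂ := hu₂_cont.comp hshift
  have hgd : ∀ t s : ℝ, HasDerivAt (fun t' : ℝ => g (t', s)) (g₁ (t, s)) t := by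
    intro t s
    have := (hu₁ (t - s) s).scomp t ((hasDerivAt_id' t).sub_const s)
    simpa [hg, hg₁, Function.comp_def] using this
  have hg₁d : ∀ t s : ℝ, HasDerivAt (fun t' : ℝ => g₁ (t', s)) (g₂ (t, s)) t := by
    intro t s
    have := (hu₂ (t - s) s).scomp t ((hasDerivAt_id' t).sub_const s)
    simpa [hg₁, hg₂, Function.comp_def] using this
  have hveq : v = fun t => ∫ s in (0:ℝ)..t, g (t, s) := funext fun t => by
    rw [hv t]
  -- first derivative
  have hdv : ∀ t : ℝ, HasDerivAt v (∫ s in (0:ℝ)..t, g₁ (t, s)) t := by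
    intro t
    have := duhamel_key g g₁ hgc hg₁c hgd t
    rw [hveq]
    have hz : g (t, t) = 0 := by simp [hg, hzero]
    rwa [hz, zero_add] at this
  have hdv' : deriv v = fun t => ∫ s in (0:ℝ)..t, g₁ (t, s) :=
    funext fun t => (hdv t).deriv
  -- second derivative
  have hdw : ∀ t : ℝ, HasDerivAt (deriv v) (g₁ (t, t) + ∫ s in (0:ℝ)..t, g₂ (t, s)) t := by
    intro t
    rw [hdv']
    exact duhamel_key g₁ g₂ hg₁c hg₂c hg₁d t
  have hAv : ∀ t : ℝ, (∫ s in (0:ℝ)..t, g₂ (t, s)) = - A (v t) := by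
    intro t
    have h1 : ∀ s : ℝ, g₂ (t, s) = - A (g (t, s)) := by
      intro s
      have := heq (t - s) s
      simp only [hg₂, hg]
      linear_combination (norm := abel) this
    rw [hveq]
    simp only [h1]
    have ig : IntervalIntegrable (fun s : ℝ => g (t, s)) volume 0 t :=
      (hgc.comp (continuous_const.prodMk continuous_id) :
        Continuous fun s : ℝ => g (t, s)).intervalIntegrable 0 t
    rw [intervalIntegral.integral_neg, A.intervalIntegral_comp_comm ig]
  refine ⟨fun t => (hdv t).differentiableAt, fun t => (hdw t).differentiableAt, ?_, ?_, ?_⟩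
  · intro t
    rw [(hdw t).deriv, hAv t, hF t]
    simp [hg₁]
  · rw [hv 0, intervalIntegral.integral_same]
  · rw [hdv']
    simp [intervalIntegral.integral_same]
end

section
/- Let H be a complex Banach space and B : H → H a continuous linear operator, and let c(t) = (1/2)(exp(itB) + exp(−itB)) and s(t) = ∫₀ᵗ c(τ) dτ. Let F : ℝ → H be continuous and v₀, v₁ ∈ H. Then the function v(t) := c(t)(v₀) + s(t)(v₁) + ∫₀ᵗ s(t − σ)(F(σ)) dσ is twice differentiable on ℝ and satisfies v″(t) + B²(v(t)) = F(t) for all t ∈ ℝ, together with v(0) = v₀ and v′(0) = v₁. -/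
open NormedSpace intervalIntegral MeasureTheory

namespace Stmt14Aux

variable {H : Type*} [NormedAddCommGroup H] [NormedSpace ℂ H] [CompleteSpace H]

noncomputable def Eo (A : H →L[ℂ] H) (t : ℝ) : H →L[ℂ] H := exp (t • A)

theorem Eo_hasDerivAt (A : H →L[ℂ] H) (t : ℝ) : HasDerivAt (Eo A) (A * Eo A t) t :=
  hasDerivAt_exp_smul_const' (𝕂 := ℝ) A t

theorem Eo_continuous (A : H →L[ℂ] H) : Continuous (Eo A) :=
  continuous_iff_continuousAt.2 fun t => (Eo_hasDerivAt A t).continuousAt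

omit [CompleteSpace H] in
theorem Eo_zero (A : H →L[ℂ] H) : Eo A 0 = 1 := by simp [Eo]

theorem Eo_add (A : H →L[ℂ] H) (a b : ℝ) : Eo A (a + b) = Eo A a * Eo A b := by
  rw [Eo, Eo, Eo, add_smul]
  exact exp_add_of_commute_of_mem_ball (𝕂 := ℝ) (((Commute.refl A).smul_left a).smul_right b)
    ((expSeries_radius_eq_top ℝ (H →L[ℂ] H)).symm ▸ edist_lt_top _ _)
    ((expSeries_radius_eq_top ℝ (H →L[ℂ] H)).symm ▸ edist_lt_top _ _)

theorem Eo_cancel (A : H →L[ℂ] H) (t : ℝ) (x : H) : Eo A t (Eo A (-t) x) = x := by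
  rw [← ContinuousLinearMap.mul_apply, ← Eo_add]
  simp [Eo_zero]

omit [CompleteSpace H] in
theorem Eo_eq (B : H →L[ℂ] H) (t : ℝ) :
    exp (((t : ℂ) * Complex.I) • B) = Eo (Complex.I • B) t := by
  rw [Eo]
  congr 1
  rw [mul_smul, ← Complex.coe_algebraMap, algebraMap_smul]

omit [CompleteSpace H] in
theorem hasDerivAt_clm_apply' {c : ℝ → H →L[ℂ] H} {c' : H →L[ℂ] H} {u : ℝ → H} {u' : H} {x : ℝ}
    (hc : HasDerivAt c c' x) (hu : HasDerivAt u u' x) :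
    HasDerivAt (fun y => c y (u y)) (c' (u x) + c x u') x := by
  have hres : HasDerivAt (fun y => (c y).restrictScalars ℝ) (c'.restrictScalars ℝ) x := by
    exact (ContinuousLinearMap.restrictScalarsL ℂ H H ℝ ℝ).hasFDerivAt.comp_hasDerivAt x hc
  exact hres.clm_apply hu

end Stmt14Aux

open Stmt14Aux

/-- In a complex Banach space `H`, for a continuous linear operator
`B : H → H`, with the operator cosine family `c(t) = (1/2)(exp(itB) + exp(−itB))` and
sine family `s(t) = ∫₀ᵗ c(τ) dτ`, for any continuous `F : ℝ → H` and `v₀, v₁ ∈ H`, the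
function `v(t) = c(t)v₀ + s(t)v₁ + ∫₀ᵗ s(t−σ)(F(σ)) dσ` is twice differentiable and
satisfies `v″ + B²v = F`, `v(0) = v₀`, `v′(0) = v₁`. -/
theorem stmt_14 {H : Type*} [NormedAddCommGroup H] [NormedSpace ℂ H] [CompleteSpace H]
    (B : H →L[ℂ] H)
    (c : ℝ → H →L[ℂ] H)
    (hc : ∀ t : ℝ, c t = ((1 : ℂ) / 2) •
      (NormedSpace.exp (((t : ℂ) * Complex.I) • B)
        + NormedSpace.exp ((-(t : ℂ) * Complex.I) • B)))
    (s : ℝ → H →L[ℂ] H)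
    (hs : ∀ t : ℝ, s t = ∫ τ in (0 : ℝ)..t, c τ)
    (F : ℝ → H) (hF : Continuous F)
    (v₀ v₁ : H)
    (v : ℝ → H)
    (hv : ∀ t : ℝ, v t = c t v₀ + s t v₁ + ∫ σ in (0 : ℝ)..t, s (t - σ) (F σ)) :
    Differentiable ℝ v ∧ Differentiable ℝ (deriv v) ∧
    (∀ t : ℝ, deriv (deriv v) t + B (B (v t)) = F t) ∧
    v 0 = v₀ ∧ deriv v 0 = v₁ := by
  set A : H →L[ℂ] H := Complex.I • B with hA
  set E : ℝ → H →L[ℂ] H := Eo A with hE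
  -- basic facts about E
  have hEd : ∀ t : ℝ, HasDerivAt E (A * E t) t := fun t => Eo_hasDerivAt A t
  have hEc : Continuous E := Eo_continuous A
  have hEcancel : ∀ (t : ℝ) (x : H), E t (E (-t) x) = x := fun t x => Eo_cancel A t x
  have hEcancel' : ∀ (t : ℝ) (x : H), E (-t) (E t x) = x := by
    intro t x
    have := Eo_cancel A (-t) x
    rwa [neg_neg] at this
  have hE0 : E 0 = 1 := Eo_zero A
  have hEneg : ∀ t : ℝ, HasDerivAt (fun u => E (-u)) (-(A * E (-t))) t := by
    intro t
    have h1 : HasDerivAt (fun u : ℝ => -u) (-1 : ℝ) t := (hasDerivAt_id t).neg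
    have := (hEd (-t)).scomp t h1
    simpa [Function.comp_def] using this
  have hEvd : ∀ (t : ℝ) (x : H), HasDerivAt (fun u => E u x) (A (E t x)) t := by
    intro t x
    have := hasDerivAt_clm_apply' (hEd t) (hasDerivAt_const t x)
    simpa [ContinuousLinearMap.mul_apply] using this
  have hEnvd : ∀ (t : ℝ) (x : H), HasDerivAt (fun u => E (-u) x) (-(A (E (-t) x))) t := by
    intro t x
    have := hasDerivAt_clm_apply' (hEneg t) (hasDerivAt_const t x)
    simpa [ContinuousLinearMap.mul_apply] using this
  -- c in terms of E
  have hcE : ∀ t : ℝ, c t = (2⁻¹ : ℂ) • (E t + E (-t)) := by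
    intro t
    have h2 : (-(t : ℂ) * Complex.I) • B = (((-t : ℝ) : ℂ) * Complex.I) • B := by push_cast; ring_nf
    rw [hc t, Eo_eq, h2, Eo_eq, one_div, hE, hA]
  have hcapp : ∀ (t : ℝ) (x : H), c t x = (2⁻¹ : ℂ) • (E t x + E (-t) x) := by
    intro t x
    rw [hcE t]
    simp
  have hc_cont : Continuous c := by
    have h1 : Continuous fun t : ℝ => (2⁻¹ : ℂ) • (E t + E (-t)) :=
      ((hEc.fun_add (hEc.comp continuous_neg)).fun_const_smul _)
    have h2 : c = fun t : ℝ => (2⁻¹ : ℂ) • (E t + E (-t)) := funext hcE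
    rw [h2]; exact h1
  -- s facts
  have hsfun : s = fun u : ℝ => ∫ τ in (0 : ℝ)..u, c τ := funext hs
  have hsd : ∀ t : ℝ, HasDerivAt s (c t) t := by
    intro t
    rw [hsfun]
    exact (hc_cont.integral_hasStrictDerivAt 0 t).hasDerivAt
  have hs_cont : Continuous s := continuous_iff_continuousAt.2 fun t => (hsd t).continuousAt
  have hs0 : s 0 = 0 := by rw [hs]; simp
  have hsapp : ∀ (t : ℝ) (x : H), s t x = ∫ τ in (0 : ℝ)..t, c τ x := by
    intro t x
    rw [hs t, ContinuousLinearMap.intervalIntegral_apply (hc_cont.intervalIntegrable 0 t)]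
  -- G
  set G : ℝ → H := fun u => ∫ σ in (0 : ℝ)..u, F σ with hGdef
  have hGd : ∀ t : ℝ, HasDerivAt G (F t) t := fun t => (hF.integral_hasStrictDerivAt 0 t).hasDerivAt
  have hG_cont : Continuous G := continuous_iff_continuousAt.2 fun t => (hGd t).continuousAt
  have hG0 : G 0 = 0 := by simp [hGdef]
  -- P and Q
  set P : ℝ → H := fun t => ∫ σ in (0 : ℝ)..t, E (-σ) (G σ) with hPdef
  set Q : ℝ → H := fun t => ∫ σ in (0 : ℝ)..t, E σ (G σ) with hQdef
  have hPic : Continuous fun σ : ℝ => E (-σ) (G σ) := (hEc.comp continuous_neg).clm_apply hG_cont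
  have hQic : Continuous fun σ : ℝ => E σ (G σ) := hEc.clm_apply hG_cont
  have hPd : ∀ t : ℝ, HasDerivAt P (E (-t) (G t)) t := fun t =>
    (hPic.integral_hasStrictDerivAt 0 t).hasDerivAt
  have hQd : ∀ t : ℝ, HasDerivAt Q (E t (G t)) t := fun t =>
    (hQic.integral_hasStrictDerivAt 0 t).hasDerivAt
  have hP_cont : Continuous P := continuous_iff_continuousAt.2 fun t => (hPd t).continuousAt
  have hQ_cont : Continuous Q := continuous_iff_continuousAt.2 fun t => (hQd t).continuousAt
  have hP0 : P 0 = 0 := by simp [hPdef]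
  have hQ0 : Q 0 = 0 := by simp [hQdef]
  -- the Duhamel term
  have hw : ∀ t : ℝ, (∫ σ in (0 : ℝ)..t, s (t - σ) (F σ))
      = (2⁻¹ : ℂ) • (E t (P t) + E (-t) (Q t)) := by
    intro t
    -- integration by parts
    have hφ : ∀ σ : ℝ, HasDerivAt (fun σ => s (t - σ) (G σ))
        (s (t - σ) (F σ) - c (t - σ) (G σ)) σ := by
      intro σ
      have hsub : HasDerivAt (fun x : ℝ => t - x) (-1 : ℝ) σ := by
        simpa using (hasDerivAt_id σ).const_sub t
      have h1 : HasDerivAt (fun σ : ℝ => s (t - σ)) (-(c (t - σ))) σ := by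
        have := (hsd (t - σ)).scomp σ hsub
        simpa [Function.comp_def] using this
      have h2 := hasDerivAt_clm_apply' h1 (hGd σ)
      convert h2 using 1
      simp [ContinuousLinearMap.neg_apply, sub_eq_neg_add]
    have hI1 : IntervalIntegrable (fun σ => c (t - σ) (G σ)) volume 0 t :=
      ((hc_cont.comp (continuous_const.sub continuous_id)).clm_apply hG_cont).intervalIntegrable 0 t
    have hI2 : IntervalIntegrable (fun σ => s (t - σ) (F σ)) volume 0 t :=
      ((hs_cont.comp (continuous_const.sub continuous_id)).clm_apply hF).intervalIntegrable 0 t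
    have h0 : (∫ σ in (0 : ℝ)..t, (s (t - σ) (F σ) - c (t - σ) (G σ))) = 0 := by
      rw [intervalIntegral.integral_eq_sub_of_hasDerivAt (fun σ _ => hφ σ) (hI2.sub hI1)]
      simp [hs0, hG0]
    rw [intervalIntegral.integral_sub hI2 hI1] at h0
    have key : (∫ σ in (0 : ℝ)..t, s (t - σ) (F σ)) = ∫ σ in (0 : ℝ)..t, c (t - σ) (G σ) :=
      sub_eq_zero.mp h0
    have hEq2 : ∀ σ : ℝ, c (t - σ) (G σ)
        = (2⁻¹ : ℂ) • (E t (E (-σ) (G σ)) + E (-t) (E σ (G σ))) := by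
      intro σ
      have e1 : E (t - σ) = E t * E (-σ) := by
        rw [hE, show t - σ = t + -σ by ring, Eo_add]
      have e2 : E (-(t - σ)) = E (-t) * E σ := by
        rw [hE, show -(t - σ) = -t + σ by ring, Eo_add]
      rw [hcapp, e1, e2]
      simp [ContinuousLinearMap.mul_apply]
    have hJ1 : IntervalIntegrable (fun σ => E t (E (-σ) (G σ))) volume 0 t :=
      (continuous_const.clm_apply hPic).intervalIntegrable 0 t
    have hJ2 : IntervalIntegrable (fun σ => E (-t) (E σ (G σ))) volume 0 t :=
      (continuous_const.clm_apply hQic).intervalIntegrable 0 t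
    rw [key, intervalIntegral.integral_congr (fun σ _ => hEq2 σ), intervalIntegral.integral_smul,
      intervalIntegral.integral_add hJ1 hJ2,
      (E t).intervalIntegral_comp_comm (hPic.intervalIntegrable 0 t),
      (E (-t)).intervalIntegral_comp_comm (hQic.intervalIntegrable 0 t)]
  -- nice form of v
  have hvnice : ∀ t : ℝ, v t = (2⁻¹ : ℂ) • (E t v₀ + E (-t) v₀)
      + (∫ τ in (0 : ℝ)..t, c τ v₁) + (2⁻¹ : ℂ) • (E t (P t) + E (-t) (Q t)) := by
    intro t
    rw [hv t, hcapp t v₀, hsapp t v₁, hw t]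
  have hvfun : v = fun t : ℝ => (2⁻¹ : ℂ) • (E t v₀ + E (-t) v₀)
      + (∫ τ in (0 : ℝ)..t, c τ v₁) + (2⁻¹ : ℂ) • (E t (P t) + E (-t) (Q t)) := funext hvnice
  -- first derivative pieces
  have h3a : ∀ t : ℝ, HasDerivAt (fun t => E t (P t)) (A (E t (P t)) + G t) t := by
    intro t
    have := hasDerivAt_clm_apply' (hEd t) (hPd t)
    simpa [ContinuousLinearMap.mul_apply, hEcancel] using this
  have h3b : ∀ t : ℝ, HasDerivAt (fun t => E (-t) (Q t)) (-(A (E (-t) (Q t))) + G t) t := by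
    intro t
    have := hasDerivAt_clm_apply' (hEneg t) (hQd t)
    simpa [ContinuousLinearMap.mul_apply, ContinuousLinearMap.neg_apply, hEcancel'] using this
  have hcv₁d : ∀ t : ℝ, HasDerivAt (fun u => ∫ τ in (0 : ℝ)..u, c τ v₁) (c t v₁) t := by
    intro t
    exact ((hc_cont.clm_apply continuous_const).integral_hasStrictDerivAt 0 t).hasDerivAt
  have hvd : ∀ t : ℝ, HasDerivAt v
      ((2⁻¹ : ℂ) • (A (E t v₀) - A (E (-t) v₀)) + c t v₁
        + ((2⁻¹ : ℂ) • (A (E t (P t)) - A (E (-t) (Q t))) + G t)) t := by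
    intro t
    rw [hvfun]
    have hp1 : HasDerivAt (fun t : ℝ => (2⁻¹ : ℂ) • (E t v₀ + E (-t) v₀))
        ((2⁻¹ : ℂ) • (A (E t v₀) - A (E (-t) v₀))) t := by
      have := ((hEvd t v₀).fun_add (hEnvd t v₀)).fun_const_smul (2⁻¹ : ℂ)
      simpa [sub_eq_add_neg] using this
    have hp3 : HasDerivAt (fun t : ℝ => (2⁻¹ : ℂ) • (E t (P t) + E (-t) (Q t)))
        ((2⁻¹ : ℂ) • (A (E t (P t)) - A (E (-t) (Q t))) + G t) t := by
      have := ((h3a t).fun_add (h3b t)).fun_const_smul (2⁻¹ : ℂ)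
      convert this using 1
      module
    exact (hp1.add (hcv₁d t)).add hp3
  have hdiff1 : Differentiable ℝ v := fun t => (hvd t).differentiableAt
  have hderiv : deriv v = fun t : ℝ => (2⁻¹ : ℂ) • (A (E t v₀) - A (E (-t) v₀)) + c t v₁
      + ((2⁻¹ : ℂ) • (A (E t (P t)) - A (E (-t) (Q t))) + G t) := funext fun t => (hvd t).deriv
  -- second derivative
  have hAEd : ∀ (t : ℝ) (x : H), HasDerivAt (fun u => A (E u x)) (A (A (E t x))) t := by
    intro t x
    have := hasDerivAt_clm_apply' (hasDerivAt_const t A) (hEvd t x)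
    simpa using this
  have hAEnd : ∀ (t : ℝ) (x : H), HasDerivAt (fun u => A (E (-u) x)) (-(A (A (E (-t) x)))) t := by
    intro t x
    have := hasDerivAt_clm_apply' (hasDerivAt_const t A) (hEnvd t x)
    simpa using this
  have hcfun : (fun t : ℝ => c t v₁) = fun t : ℝ => (2⁻¹ : ℂ) • (E t v₁ + E (-t) v₁) :=
    funext fun t => hcapp t v₁
  have hDd : ∀ t : ℝ, HasDerivAt (fun t : ℝ => (2⁻¹ : ℂ) • (A (E t v₀) - A (E (-t) v₀)) + c t v₁
      + ((2⁻¹ : ℂ) • (A (E t (P t)) - A (E (-t) (Q t))) + G t))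
      ((2⁻¹ : ℂ) • (A (A (E t v₀)) + A (A (E (-t) v₀)))
        + (2⁻¹ : ℂ) • (A (E t v₁) - A (E (-t) v₁))
        + ((2⁻¹ : ℂ) • (A (A (E t (P t))) + A (A (E (-t) (Q t)))) + F t)) t := by
    intro t
    have hp1 : HasDerivAt (fun t : ℝ => (2⁻¹ : ℂ) • (A (E t v₀) - A (E (-t) v₀)))
        ((2⁻¹ : ℂ) • (A (A (E t v₀)) + A (A (E (-t) v₀)))) t := by
      have := ((hAEd t v₀).fun_sub (hAEnd t v₀)).fun_const_smul (2⁻¹ : ℂ)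
      simpa [sub_neg_eq_add] using this
    have hp2 : HasDerivAt (fun t : ℝ => c t v₁)
        ((2⁻¹ : ℂ) • (A (E t v₁) - A (E (-t) v₁))) t := by
      rw [hcfun]
      have := ((hEvd t v₁).fun_add (hEnvd t v₁)).fun_const_smul (2⁻¹ : ℂ)
      simpa [sub_eq_add_neg] using this
    have hp3a : HasDerivAt (fun t : ℝ => A (E t (P t))) (A (A (E t (P t))) + A (G t)) t := by
      have := hasDerivAt_clm_apply' (hasDerivAt_const t A) (h3a t)
      simpa [map_add] using this
    have hp3b : HasDerivAt (fun t : ℝ => A (E (-t) (Q t)))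
        (-(A (A (E (-t) (Q t)))) + A (G t)) t := by
      have := hasDerivAt_clm_apply' (hasDerivAt_const t A) (h3b t)
      simpa [map_add, map_neg] using this
    have hp3 : HasDerivAt (fun t : ℝ => (2⁻¹ : ℂ) • (A (E t (P t)) - A (E (-t) (Q t))) + G t)
        ((2⁻¹ : ℂ) • (A (A (E t (P t))) + A (A (E (-t) (Q t)))) + F t) t := by
      have := ((hp3a.fun_sub hp3b).fun_const_smul (2⁻¹ : ℂ)).fun_add (hGd t)
      convert this using 1
      module
    exact (hp1.add hp2).add hp3
  have hdiff2 : Differentiable ℝ (deriv v) := by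
    rw [hderiv]
    exact fun t => (hDd t).differentiableAt
  have hderiv2 : ∀ t : ℝ, deriv (deriv v) t
      = (2⁻¹ : ℂ) • (A (A (E t v₀)) + A (A (E (-t) v₀)))
        + (2⁻¹ : ℂ) • (A (E t v₁) - A (E (-t) v₁))
        + ((2⁻¹ : ℂ) • (A (A (E t (P t))) + A (A (E (-t) (Q t)))) + F t) := by
    intro t
    rw [hderiv]
    exact (hDd t).deriv
  -- B∘B in terms of A∘A
  have hBBA : ∀ x : H, B (B x) = -(A (A x)) := by
    intro x
    rw [hA]
    simp [ContinuousLinearMap.smul_apply, _root_.map_smul, smul_smul, Complex.I_mul_I]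
  -- A²(s t v₁)
  have hsBB : ∀ t : ℝ, A (A (∫ τ in (0 : ℝ)..t, c τ v₁))
      = (2⁻¹ : ℂ) • (A (E t v₁) - A (E (-t) v₁)) := by
    intro t
    have hIc : IntervalIntegrable (fun τ => c τ v₁) volume 0 t :=
      (hc_cont.clm_apply continuous_const).intervalIntegrable 0 t
    rw [← A.intervalIntegral_comp_comm hIc,
      ← A.intervalIntegral_comp_comm ((continuous_const.clm_apply
        (hc_cont.clm_apply continuous_const)).intervalIntegrable 0 t)]
    have hψ : ∀ τ : ℝ, HasDerivAt (fun τ : ℝ => (2⁻¹ : ℂ) • (A (E τ v₁) - A (E (-τ) v₁)))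
        (A (A (c τ v₁))) τ := by
      intro τ
      have := ((hAEd τ v₁).fun_sub (hAEnd τ v₁)).fun_const_smul (2⁻¹ : ℂ)
      convert this using 1
      rw [hcapp]
      simp only [_root_.map_smul, map_add]
      module
    rw [intervalIntegral.integral_eq_sub_of_hasDerivAt (fun τ _ => hψ τ)
      ((continuous_const.clm_apply (continuous_const.clm_apply
        (hc_cont.clm_apply continuous_const))).intervalIntegrable 0 t)]
    simp
  -- the equation
  have hPDE : ∀ t : ℝ, deriv (deriv v) t + B (B (v t)) = F t := by
    intro t
    rw [hderiv2 t, hBBA, hvnice t]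
    simp only [map_add, _root_.map_smul, hsBB t]
    module
  refine ⟨hdiff1, hdiff2, hPDE, ?_, ?_⟩
  · rw [hvnice 0]
    simp only [neg_zero, hE0, hP0, hQ0, ContinuousLinearMap.one_apply, map_zero,
      intervalIntegral.integral_same]
    module
  · rw [hderiv]
    simp only [neg_zero, hE0, hP0, hQ0, hG0, ContinuousLinearMap.one_apply, map_zero, hcapp]
    module
end

section
/- Let H be a complex Hilbert space and B : H → H a bounded self-adjoint operator. Let c(t) = (1/2)(exp(itB) + exp(−itB)) and s(t) = ∫₀ᵗ c(τ) dτ. Let F : ℝ → H be continuous, v₀, v₁ ∈ H, and v(t) = c(t)(v₀) + s(t)(v₁) + ∫₀ᵗ s(t − σ)(F(σ)) dσ. Then for all t ≥ 0: ‖B(v(t))‖ ≤ ‖B(v₀)‖ + ‖v₁‖ + ∫₀ᵗ ‖F(σ)‖ dσ. -/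
set_option maxHeartbeats 1000000

section Aux16
variable {H : Type*} [NormedAddCommGroup H] [InnerProductSpace ℂ H] [CompleteSpace H]

lemma aux16_comp_ofReal {E : Type*} [NormedAddCommGroup E] [NormedSpace ℂ E]
    {e : ℂ → E} {e' : E} {z : ℝ} (hf : HasDerivAt e e' z) :
    HasDerivAt (fun y : ℝ => e y) e' z := by
  have A := hf.hasFDerivAt.restrictScalars ℝ
  have C := A.comp z (Complex.ofRealCLM.hasFDerivAt (x := z))
  simpa [Function.comp_def] using C.hasDerivAt

lemma aux16_exp_norm (B : H →L[ℂ] H) (hB : IsSelfAdjoint B) (r : ℝ) (x : H) :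
    ‖NormedSpace.exp (((r : ℂ) * Complex.I) • B) x‖ = ‖x‖ := by
  have hsk : ((r : ℂ) * Complex.I) ∈ skewAdjoint ℂ := by
    rw [skewAdjoint.mem_iff]
    simp [Complex.ext_iff]
  letI : NormedAlgebra ℚ (H →L[ℂ] H) := .restrictScalars ℚ ℂ (H →L[ℂ] H)
  exact ContinuousLinearMap.norm_map_of_mem_unitary
    (NormedSpace.exp_mem_unitary_of_mem_skewAdjoint
      (IsSelfAdjoint.smul_mem_skewAdjoint hsk hB)) x

lemma aux16_comm (B : H →L[ℂ] H) (z : ℂ) (x : H) :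
    B (NormedSpace.exp (z • B) x) = NormedSpace.exp (z • B) (B x) := by
  have h : Commute B (NormedSpace.exp (z • B)) :=
    Commute.exp_right ((Commute.refl B).smul_right z)
  have := congrArg (fun (T : H →L[ℂ] H) => T x) h.eq
  simpa [ContinuousLinearMap.mul_apply] using this

lemma aux16_hasDerivAt (B : H →L[ℂ] H) (r : ℝ) :
    HasDerivAt (fun u : ℝ => NormedSpace.exp (((u : ℂ) * Complex.I) • B))
      (NormedSpace.exp (((r : ℂ) * Complex.I) • B) * (Complex.I • B)) r := by
  have h : ∀ u : ℂ, (u * Complex.I) • B = u • (Complex.I • B) := by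
    intro u; rw [smul_smul]
  have h1 : HasDerivAt (fun z : ℂ => NormedSpace.exp (z • (Complex.I • B)))
      (NormedSpace.exp (((r : ℂ)) • (Complex.I • B)) * (Complex.I • B)) (r : ℂ) :=
    hasDerivAt_exp_smul_const (Complex.I • B) (r : ℂ)
  simpa [h] using aux16_comp_ofReal h1

end Aux16

/-- In a complex Hilbert space `H`, for a bounded self-adjoint operator
`B : H → H`, with `c(t) = (1/2)(exp(itB) + exp(−itB))` and `s(t) = ∫₀ᵗ c(τ) dτ`,
for continuous `F : ℝ → H`, `v₀, v₁ ∈ H` and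
`v(t) = c(t)v₀ + s(t)v₁ + ∫₀ᵗ s(t−σ)(F(σ)) dσ`, one has the a priori estimate
`‖B(v(t))‖ ≤ ‖B(v₀)‖ + ‖v₁‖ + ∫₀ᵗ ‖F(σ)‖ dσ` for all `t ≥ 0`. -/
theorem stmt_16 {H : Type*} [NormedAddCommGroup H] [InnerProductSpace ℂ H]
    [CompleteSpace H]
    (B : H →L[ℂ] H) (hB : IsSelfAdjoint B)
    (c : ℝ → H →L[ℂ] H)
    (hc : ∀ t : ℝ, c t = ((1 : ℂ) / 2) •
      (NormedSpace.exp (((t : ℂ) * Complex.I) • B)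
        + NormedSpace.exp ((-(t : ℂ) * Complex.I) • B)))
    (s : ℝ → H →L[ℂ] H)
    (hs : ∀ t : ℝ, s t = ∫ τ in (0 : ℝ)..t, c τ)
    (F : ℝ → H) (hF : Continuous F)
    (v₀ v₁ : H)
    (v : ℝ → H)
    (hv : ∀ t : ℝ, v t = c t v₀ + s t v₁ + ∫ σ in (0 : ℝ)..t, s (t - σ) (F σ)) :
    ∀ t : ℝ, 0 ≤ t →
      ‖B (v t)‖ ≤ ‖B v₀‖ + ‖v₁‖ + ∫ σ in (0 : ℝ)..t, ‖F σ‖ := by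
  set E : ℝ → H →L[ℂ] H := fun r => NormedSpace.exp (((r : ℂ) * Complex.I) • B) with hEdef
  have hcE : ∀ τ : ℝ, c τ = ((1 : ℂ) / 2) • (E τ + E (-τ)) := by
    intro τ
    have : (-(τ : ℂ) * Complex.I) • B = ((((-τ : ℝ)) : ℂ) * Complex.I) • B := by
      push_cast; ring_nf
    rw [hc τ, this]
  have hEnorm : ∀ (r : ℝ) (x : H), ‖E r x‖ = ‖x‖ := fun r x => aux16_exp_norm B hB r x
  have hBE : ∀ (r : ℝ) (x : H), B (E r x) = E r (B x) := fun r x =>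
    aux16_comm B ((r : ℂ) * Complex.I) x
  have hEcont : Continuous E :=
    continuous_iff_continuousAt.mpr fun r => (aux16_hasDerivAt B r).continuousAt
  have hccont : Continuous c := by
    rw [show c = fun τ => ((1 : ℂ) / 2) • (E τ + E (-τ)) from funext hcE]
    exact ((hEcont.add (hEcont.comp continuous_neg)).const_smul ((1 : ℂ) / 2))
  have hc_half : ∀ (r : ℝ) (x : H), c r x = ((1 : ℂ) / 2) • (E r x + E (-r) x) := by
    intro r x; rw [hcE r]; simp
  have hBc : ∀ (r : ℝ) (x : H), B (c r x) = c r (B x) := by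
    intro r x
    rw [hc_half, hc_half, map_smul, map_add, hBE, hBE]
  have hnorm_c : ∀ (r : ℝ) (x : H), ‖c r x‖ ≤ ‖x‖ := by
    intro r x
    rw [hc_half, norm_smul]
    have h12 : ‖(1 : ℂ) / 2‖ = 1 / 2 := by norm_num
    calc ‖(1 : ℂ) / 2‖ * ‖E r x + E (-r) x‖ ≤ (1 / 2) * (‖E r x‖ + ‖E (-r) x‖) := by
          rw [h12]; gcongr; exact norm_add_le _ _
      _ = ‖x‖ := by rw [hEnorm, hEnorm]; ring
  -- derivative of r ↦ E r x
  have hEx : ∀ (r : ℝ) (x : H),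
      HasDerivAt (fun u : ℝ => E u x) (Complex.I • E r (B x)) r := by
    intro r x
    have h := ((ContinuousLinearMap.apply ℂ H x).restrictScalars ℝ).hasFDerivAt.comp_hasDerivAt
      r (aux16_hasDerivAt B r)
    simpa [Function.comp_def, ContinuousLinearMap.mul_apply, map_smul] using h
  have hEnegx : ∀ (r : ℝ) (x : H),
      HasDerivAt (fun u : ℝ => E (-u) x) (-(Complex.I • E (-r) (B x))) r := by
    intro r x
    have h := (hEx (-r) x).scomp r (hasDerivAt_neg r)
    simpa [Function.comp_def] using h
  -- antiderivative for B (c τ x)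
  have hG : ∀ (x : H) (r : ℝ),
      HasDerivAt (fun u : ℝ => ((2 : ℂ) * Complex.I)⁻¹ • (E u x - E (-u) x))
        (B (c r x)) r := by
    intro x r
    have h := ((hEx r x).sub (hEnegx r x)).const_smul (((2 : ℂ) * Complex.I)⁻¹)
    have heq : ((2 : ℂ) * Complex.I)⁻¹ •
        (Complex.I • E r (B x) - -(Complex.I • E (-r) (B x))) = B (c r x) := by
      rw [hBc, hc_half, sub_neg_eq_add, ← smul_add, smul_smul]
      congr 1
      field_simp
    rw [← heq]
    exact h
  have hkey : ∀ (r : ℝ) (x : H),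
      B (s r x) = ((2 : ℂ) * Complex.I)⁻¹ • (E r x - E (-r) x) := by
    intro r x
    have hint : IntervalIntegrable c MeasureTheory.volume 0 r := hccont.intervalIntegrable _ _
    have hcxcont : Continuous fun τ => c τ x := hccont.clm_apply continuous_const
    have h2 : B (s r x) = ∫ τ in (0 : ℝ)..r, B (c τ x) := by
      rw [hs r, ContinuousLinearMap.intervalIntegral_apply hint x]
      exact (ContinuousLinearMap.intervalIntegral_comp_comm B
        (hcxcont.intervalIntegrable _ _)).symm
    have hBcx : Continuous fun τ => B (c τ x) := B.continuous.comp hcxcont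
    have h3 := intervalIntegral.integral_eq_sub_of_hasDerivAt
      (f := fun u : ℝ => ((2 : ℂ) * Complex.I)⁻¹ • (E u x - E (-u) x))
      (fun τ _ => hG x τ) (hBcx.intervalIntegrable 0 r)
    rw [h2, h3]
    have hE0 : E 0 = 1 := by
      simp [hEdef, NormedSpace.exp_zero]
    simp [hE0]
  have hnorm_Bs : ∀ (r : ℝ) (x : H), ‖B (s r x)‖ ≤ ‖x‖ := by
    intro r x
    rw [hkey, norm_smul]
    have h2I : ‖((2 : ℂ) * Complex.I)⁻¹‖ = 1 / 2 := by
      rw [norm_inv]; simp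
    calc ‖((2 : ℂ) * Complex.I)⁻¹‖ * ‖E r x - E (-r) x‖
        ≤ (1 / 2) * (‖E r x‖ + ‖E (-r) x‖) := by
          rw [h2I]; gcongr; exact norm_sub_le _ _
      _ = ‖x‖ := by rw [hEnorm, hEnorm]; ring
  have hscont : Continuous s := by
    rw [show s = fun b => ∫ τ in (0 : ℝ)..b, c τ from funext hs]
    exact intervalIntegral.continuous_primitive (fun a b => hccont.intervalIntegrable a b) 0
  intro t ht
  have hintg : Continuous fun σ => s (t - σ) (F σ) :=
    (hscont.comp (continuous_const.sub continuous_id)).clm_apply hF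
  have hBint : B (∫ σ in (0 : ℝ)..t, s (t - σ) (F σ))
      = ∫ σ in (0 : ℝ)..t, B (s (t - σ) (F σ)) :=
    (ContinuousLinearMap.intervalIntegral_comp_comm B (hintg.intervalIntegrable _ _)).symm
  have h3 : ‖B (∫ σ in (0 : ℝ)..t, s (t - σ) (F σ))‖ ≤ ∫ σ in (0 : ℝ)..t, ‖F σ‖ := by
    rw [hBint]
    refine le_trans (intervalIntegral.norm_integral_le_integral_norm ht) ?_
    refine intervalIntegral.integral_mono_on ht ?_ ((hF.norm).intervalIntegrable _ _)
      (fun σ _ => hnorm_Bs _ _)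
    exact ((B.continuous.comp hintg).norm).intervalIntegrable _ _
  have h1 : ‖B (c t v₀)‖ ≤ ‖B v₀‖ := by rw [hBc]; exact hnorm_c _ _
  have h2 : ‖B (s t v₁)‖ ≤ ‖v₁‖ := hnorm_Bs _ _
  rw [hv t]
  calc ‖B (c t v₀ + s t v₁ + ∫ σ in (0 : ℝ)..t, s (t - σ) (F σ))‖
      ≤ ‖B (c t v₀)‖ + ‖B (s t v₁)‖ + ‖B (∫ σ in (0 : ℝ)..t, s (t - σ) (F σ))‖ := by
        rw [map_add, map_add]
        exact le_trans (norm_add_le _ _) (by gcongr; exact norm_add_le _ _)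
    _ ≤ ‖B v₀‖ + ‖v₁‖ + ∫ σ in (0 : ℝ)..t, ‖F σ‖ := by gcongr
end
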